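/- arXiv:1807.06007 — 7 statements merged into one kernel-verified Lean document; each statement's English description precedes it below -/
import Mathlib

section
/- For every Lebesgue eigenbasis (ψ_i, λ_i) for (μ, f, n), the Lebesgue quadrature reproduces the integral of f exactly: ∫ f dμ = Σ_{i=0}^{n−1} λ_i w^[i], where w^[i] = (∫ ψ_i dμ)². -/
open MeasureTheory Polynomial

/-- A Lebesgue eigenbasis for `(μ, f, n)`: real polynomials `ψ i` of degree `≤ n-1`
and reals `lam i` with `∫ ψ i ψ j dμ = δ_{ij}` and `∫ ψ i ψ j f dμ = lam i δ_{ij}`. -/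
def LebesgueEigenbasis (μ : Measure ℝ) (f : ℝ → ℝ) (n : ℕ)
    (ψ : Fin n → Polynomial ℝ) (lam : Fin n → ℝ) : Prop :=
  (∀ i, (ψ i).natDegree ≤ n - 1) ∧
  (∀ i j, (∫ x, (ψ i).eval x * (ψ j).eval x ∂μ) = if i = j then 1 else 0) ∧
  (∀ i j, (∫ x, (ψ i).eval x * (ψ j).eval x * f x ∂μ) = if i = j then lam i else 0)

/-- the Lebesgue quadrature reproduces `∫ f dμ` exactly. -/
theorem lebesgue_quadrature_exact_for_f (n : ℕ) (hn : 1 ≤ n) (μ : Measure ℝ)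
    (hmom : ∀ k : ℕ, Integrable (fun x => |x| ^ k) μ)
    (hgram : (Matrix.of fun j k : Fin n => ∫ x, x ^ ((j : ℕ) + (k : ℕ)) ∂μ).PosDef)
    (f : ℝ → ℝ) (hf : Measurable f)
    (hfint : ∀ m ≤ 2 * n - 2, Integrable (fun x => f x * x ^ m) μ)
    (ψ : Fin n → Polynomial ℝ) (lam : Fin n → ℝ)
    (heb : LebesgueEigenbasis μ f n ψ lam) :
    (∫ x, f x ∂μ) = ∑ i, lam i * (∫ x, (ψ i).eval x ∂μ) ^ 2 := by
  obtain ⟨hdeg, horth, heig⟩ := heb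
  -- monomials are integrable
  have hmono : ∀ k : ℕ, Integrable (fun x : ℝ => x ^ k) μ := by
    intro k
    have h1 : Integrable (fun x : ℝ => ‖x ^ k‖) μ := by
      simpa [Real.norm_eq_abs, abs_pow] using hmom k
    exact (integrable_norm_iff ((measurable_id.pow_const k).aestronglyMeasurable)).mp h1
  -- polynomials are integrable
  have hIntPoly : ∀ p : ℝ[X], Integrable (fun x => p.eval x) μ := by
    intro p
    have h : (fun x : ℝ => p.eval x)
        = fun x => ∑ m ∈ Finset.range (p.natDegree + 1), p.coeff m * x ^ m := by
      funext x; exact p.eval_eq_sum_range x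
    rw [h]
    exact integrable_finset_sum _ fun m _ => (hmono m).const_mul _
  -- f times a polynomial of degree ≤ 2n-2 is integrable
  have hIntfp : ∀ p : ℝ[X], p.natDegree ≤ 2 * n - 2 →
      Integrable (fun x => f x * p.eval x) μ := by
    intro p hp
    have h : (fun x : ℝ => f x * p.eval x)
        = fun x => ∑ m ∈ Finset.range (p.natDegree + 1), p.coeff m * (f x * x ^ m) := by
      funext x
      rw [p.eval_eq_sum_range x, Finset.mul_sum]
      exact Finset.sum_congr rfl fun m _ => by ring
    rw [h]
    refine integrable_finset_sum _ fun m hm => ?_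
    have hm' : m ≤ 2 * n - 2 := le_trans (Nat.lt_succ_iff.mp (Finset.mem_range.mp hm)) hp
    exact (hfint m hm').const_mul _
  have hdeg' : ∀ i, (ψ i).natDegree < n := fun i =>
    lt_of_le_of_lt (hdeg i) (Nat.sub_lt (by omega) one_pos)
  set B : Matrix (Fin n) (Fin n) ℝ := Matrix.of (fun i k : Fin n => (ψ i).coeff k) with hB
  set G : Matrix (Fin n) (Fin n) ℝ :=
    Matrix.of (fun j k : Fin n => ∫ x, x ^ ((j : ℕ) + (k : ℕ)) ∂μ) with hG
  have heval : ∀ (i : Fin n) (x : ℝ),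
      (ψ i).eval x = ∑ k : Fin n, B i k * x ^ (k : ℕ) := by
    intro i x
    rw [(ψ i).eval_eq_sum_range' (hdeg' i) x]
    exact (Fin.sum_univ_eq_sum_range _ n).symm
  -- product integrals expand along the Gram matrix
  have hswap : ∀ i j : Fin n, (∫ x, (ψ i).eval x * (ψ j).eval x ∂μ)
      = ∑ k : Fin n, ∑ l : Fin n, B i k * B j l * G k l := by
    intro i j
    have h1 : (fun x => (ψ i).eval x * (ψ j).eval x)
        = fun x => ∑ k : Fin n, ∑ l : Fin n, B i k * B j l * x ^ ((k : ℕ) + (l : ℕ)) := by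
      funext x
      rw [heval i x, heval j x, Finset.sum_mul_sum]
      refine Finset.sum_congr rfl fun k _ => Finset.sum_congr rfl fun l _ => ?_
      rw [pow_add]; ring
    rw [h1, integral_finset_sum _ fun k _ => integrable_finset_sum _ fun l _ =>
      (hmono _).const_mul _]
    refine Finset.sum_congr rfl fun k _ => ?_
    rw [integral_finset_sum _ fun l _ => (hmono _).const_mul _]
    exact Finset.sum_congr rfl fun l _ => integral_const_mul _ _
  -- orthonormality in matrix form
  have hBGB : B * G * B.transpose = 1 := by
    ext i j
    have h1 := (hswap i j).symm.trans (horth i j)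
    simp only [Matrix.mul_apply, Matrix.transpose_apply, Matrix.one_apply]
    rw [← h1]
    rw [Finset.sum_comm]
    refine Finset.sum_congr rfl fun l _ => ?_
    rw [Finset.sum_mul]
    exact Finset.sum_congr rfl fun k _ => by ring
  have hdetB : B.det ≠ 0 := by
    have h := congrArg Matrix.det hBGB
    rw [Matrix.det_mul, Matrix.det_mul, Matrix.det_transpose, Matrix.det_one] at h
    intro h0; rw [h0] at h; simp at h
  have hunit : IsUnit B.transpose.det := by
    rw [Matrix.det_transpose]; exact (isUnit_iff_ne_zero).mpr hdetB
  set z : Fin n := ⟨0, by omega⟩ with hz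
  set e0 : Fin n → ℝ := fun k => if k = z then 1 else 0 with he0
  set d : Fin n → ℝ := (B.transpose)⁻¹.mulVec e0 with hd
  have hBd : B.transpose.mulVec d = e0 := by
    rw [hd, Matrix.mulVec_mulVec, Matrix.mul_nonsing_inv _ hunit, Matrix.one_mulVec]
  -- the constant polynomial 1 in terms of the ψ's
  have hone : ∀ x : ℝ, ∑ i : Fin n, d i * (ψ i).eval x = 1 := by
    intro x
    have h1 : ∑ i : Fin n, d i * (ψ i).eval x
        = ∑ k : Fin n, (B.transpose.mulVec d) k * x ^ (k : ℕ) := by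
      simp only [heval, Finset.mul_sum, Matrix.mulVec, dotProduct,
        Matrix.transpose_apply, Finset.sum_mul]
      rw [Finset.sum_comm]
      exact Finset.sum_congr rfl fun k _ => Finset.sum_congr rfl fun i _ => by ring
    rw [h1, hBd, he0]
    simp [Finset.sum_ite_eq', hz]
  -- ∫ ψ i = d i
  have hpsipsi : ∀ i j : Fin n, Integrable (fun x => (ψ i).eval x * (ψ j).eval x) μ := by
    intro i j
    have h : (fun x => (ψ i).eval x * (ψ j).eval x) = fun x => (ψ i * ψ j).eval x := by
      funext x; simp
    rw [h]; exact hIntPoly _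
  have hdi : ∀ i : Fin n, (∫ x, (ψ i).eval x ∂μ) = d i := by
    intro i
    have h1 : (fun x => (ψ i).eval x)
        = fun x => ∑ j : Fin n, d j * ((ψ i).eval x * (ψ j).eval x) := by
      funext x
      rw [show ∑ j : Fin n, d j * ((ψ i).eval x * (ψ j).eval x)
          = (ψ i).eval x * ∑ j : Fin n, d j * (ψ j).eval x by
        rw [Finset.mul_sum]; exact Finset.sum_congr rfl fun j _ => by ring]
      rw [hone x, mul_one]
    rw [h1, integral_finset_sum _ fun j _ => ((hpsipsi i j).const_mul _)]
    have h2 : ∀ j : Fin n, (∫ x, d j * ((ψ i).eval x * (ψ j).eval x) ∂μ)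
        = d j * if i = j then 1 else 0 := by
      intro j; rw [integral_const_mul, horth i j]
    rw [Finset.sum_congr rfl fun j _ => h2 j]
    simp
  -- f times ψ i ψ j is integrable
  have hpsif : ∀ i j : Fin n, Integrable (fun x => (ψ i).eval x * (ψ j).eval x * f x) μ := by
    intro i j
    have hdij : (ψ i * ψ j).natDegree ≤ 2 * n - 2 := by
      refine le_trans (natDegree_mul_le) ?_
      have := hdeg i; have := hdeg j; omega
    have h : (fun x => (ψ i).eval x * (ψ j).eval x * f x)
        = fun x => f x * (ψ i * ψ j).eval x := by
      funext x; simp; ring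
    rw [h]; exact hIntfp _ hdij
  -- the main computation
  have hmain : (∫ x, f x ∂μ)
      = ∑ i : Fin n, ∑ j : Fin n, d i * d j * ∫ x, (ψ i).eval x * (ψ j).eval x * f x ∂μ := by
    have h1 : (fun x => f x)
        = fun x => ∑ i : Fin n, ∑ j : Fin n,
            d i * d j * ((ψ i).eval x * (ψ j).eval x * f x) := by
      funext x
      have : ∑ i : Fin n, ∑ j : Fin n, d i * d j * ((ψ i).eval x * (ψ j).eval x * f x)
          = (∑ i : Fin n, d i * (ψ i).eval x) * (∑ j : Fin n, d j * (ψ j).eval x) * f x := by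
        rw [Finset.sum_mul_sum, Finset.sum_mul]
        refine Finset.sum_congr rfl fun i _ => ?_
        rw [Finset.sum_mul]
        exact Finset.sum_congr rfl fun j _ => by ring
      rw [this, hone x, one_mul, one_mul]
    rw [h1, integral_finset_sum _ fun i _ => integrable_finset_sum _ fun j _ =>
      ((hpsif i j).const_mul _)]
    refine Finset.sum_congr rfl fun i _ => ?_
    rw [integral_finset_sum _ fun j _ => ((hpsif i j).const_mul _)]
    exact Finset.sum_congr rfl fun j _ => integral_const_mul _ _
  rw [hmain]
  refine Finset.sum_congr rfl fun i _ => ?_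
  rw [Finset.sum_congr rfl fun j _ => by rw [heig i j]]
  rw [hdi i]
  simp [mul_ite]
  ring
end

section
/- (Exactness of the Lebesgue quadrature, Theorem 1.) Let (ψ_i, λ_i) be a Lebesgue eigenbasis for (μ, f, n) and let P be a real polynomial of degree ≤ 2n−2 written as a finite sum P(x) = Σ_{m=1}^{M} A_m(x) B_m(x) with each A_m, B_m a real polynomial of degree ≤ n−1. Then ∫ P(x) f(x) dμ(x) = Σ_{i=0}^{n−1} λ_i w_P^[i], where w_P^[i] = Σ_{m=1}^{M} (∫ A_m ψ_i dμ)(∫ B_m ψ_i dμ). -/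
open MeasureTheory Polynomial

private lemma integrable_polyEval (μ : Measure ℝ)
    (hmom : ∀ k : ℕ, Integrable (fun x => |x| ^ k) μ) (Q : Polynomial ℝ) :
    Integrable (fun x => Q.eval x) μ := by
  have h : (fun x : ℝ => Q.eval x)
      = fun x => ∑ k ∈ Finset.range (Q.natDegree + 1), Q.coeff k * x ^ k := by
    funext x; exact Q.eval_eq_sum_range x
  rw [h]
  refine integrable_finset_sum _ fun k _ => ?_
  refine Integrable.const_mul ?_ _
  refine (hmom k).mono' ((measurable_id.pow_const k).aestronglyMeasurable) ?_
  exact Filter.Eventually.of_forall fun x => by simp [Real.norm_eq_abs, abs_pow]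

private lemma integrable_polyEval_mul_f (n : ℕ) (μ : Measure ℝ) (f : ℝ → ℝ)
    (hfint : ∀ m ≤ 2 * n - 2, Integrable (fun x => f x * x ^ m) μ)
    (Q : Polynomial ℝ) (hQ : Q.natDegree ≤ 2 * n - 2) :
    Integrable (fun x => Q.eval x * f x) μ := by
  have h : (fun x : ℝ => Q.eval x * f x)
      = fun x => ∑ k ∈ Finset.range (2 * n - 2 + 1), Q.coeff k * (f x * x ^ k) := by
    funext x
    rw [Polynomial.eval_eq_sum_range' (Nat.lt_succ_of_le hQ), Finset.sum_mul]
    exact Finset.sum_congr rfl fun k _ => by ring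
  rw [h]
  refine integrable_finset_sum _ fun k hk => ?_
  exact (hfint k (Nat.lt_succ_iff.mp (Finset.mem_range.mp hk))).const_mul _

private lemma integral_rep (μ : Measure ℝ)
    (hmom : ∀ k : ℕ, Integrable (fun x => |x| ^ k) μ)
    {n : ℕ} (ψ : Fin n → Polynomial ℝ)
    (horth : ∀ i j, (∫ x, (ψ i).eval x * (ψ j).eval x ∂μ) = if i = j then 1 else 0)
    (a : Fin n → ℝ) (Q : Polynomial ℝ) (hQ : Q = ∑ i, a i • ψ i) (j : Fin n) :
    (∫ x, Q.eval x * (ψ j).eval x ∂μ) = a j := by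
  have h : (fun x : ℝ => Q.eval x * (ψ j).eval x)
      = fun x => ∑ i, a i * ((ψ i * ψ j).eval x) := by
    funext x
    simp [hQ, Polynomial.eval_finset_sum, Finset.sum_mul, mul_assoc]
  rw [h, integral_finset_sum _
    (fun i _ => (integrable_polyEval μ hmom (ψ i * ψ j)).const_mul _)]
  simp only [integral_const_mul, Polynomial.eval_mul, horth]
  simp

private lemma exists_rep (n : ℕ) (hn : 1 ≤ n) (μ : Measure ℝ)
    (hmom : ∀ k : ℕ, Integrable (fun x => |x| ^ k) μ)
    (ψ : Fin n → Polynomial ℝ)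
    (hdeg : ∀ i, (ψ i).natDegree ≤ n - 1)
    (horth : ∀ i j, (∫ x, (ψ i).eval x * (ψ j).eval x ∂μ) = if i = j then 1 else 0)
    (Q : Polynomial ℝ) (hQ : Q.natDegree ≤ n - 1) :
    ∃ a : Fin n → ℝ, Q = ∑ i, a i • ψ i := by
  have hmem : ∀ R : Polynomial ℝ, R.natDegree ≤ n - 1 → R ∈ Polynomial.degreeLT ℝ n := by
    intro R hR
    rw [Polynomial.mem_degreeLT]
    calc R.degree ≤ (R.natDegree : WithBot ℕ) := Polynomial.degree_le_natDegree
    _ < (n : WithBot ℕ) := by exact_mod_cast (by omega : R.natDegree < n)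
  set ψ' : Fin n → Polynomial.degreeLT ℝ n := fun i => ⟨ψ i, hmem _ (hdeg i)⟩ with hψ'
  have hli : LinearIndependent ℝ ψ' := by
    rw [Fintype.linearIndependent_iff]
    intro c hc j
    have hc0 : (0 : Polynomial ℝ) = ∑ i, c i • ψ i := by
      have := congrArg (Subtype.val) hc
      simpa [ψ'] using this.symm
    have := integral_rep μ hmom ψ horth c 0 hc0 j
    simpa using this.symm
  have hcard : Fintype.card (Fin n) = Module.finrank ℝ (Polynomial.degreeLT ℝ n) := by
    rw [Fintype.card_fin, (Polynomial.degreeLTEquiv ℝ n).finrank_eq, Module.finrank_fin_fun]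
  have : Nonempty (Fin n) := ⟨⟨0, hn⟩⟩
  set b := basisOfLinearIndependentOfCardEqFinrank hli hcard with hbdef
  refine ⟨fun i => b.repr ⟨Q, hmem Q hQ⟩ i, ?_⟩
  have hs := congrArg Subtype.val (b.sum_repr ⟨Q, hmem Q hQ⟩)
  refine Eq.trans hs.symm ?_
  simp [hbdef, coe_basisOfLinearIndependentOfCardEqFinrank, ψ']

/-- Theorem 1: exactness of the Lebesgue quadrature for
`∫ P f dμ` with `P` of degree `≤ 2n-2` written as `P = Σ_m A_m B_m`. -/
theorem lebesgue_quadrature_exactness (n : ℕ) (hn : 1 ≤ n) (μ : Measure ℝ)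
    (hmom : ∀ k : ℕ, Integrable (fun x => |x| ^ k) μ)
    (hgram : (Matrix.of fun j k : Fin n => ∫ x, x ^ ((j : ℕ) + (k : ℕ)) ∂μ).PosDef)
    (f : ℝ → ℝ) (hf : Measurable f)
    (hfint : ∀ m ≤ 2 * n - 2, Integrable (fun x => f x * x ^ m) μ)
    (ψ : Fin n → Polynomial ℝ) (lam : Fin n → ℝ)
    (heb : LebesgueEigenbasis μ f n ψ lam)
    (P : Polynomial ℝ) (hPdeg : P.natDegree ≤ 2 * n - 2)
    (M : ℕ) (A B : Fin M → Polynomial ℝ)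
    (hA : ∀ m, (A m).natDegree ≤ n - 1) (hB : ∀ m, (B m).natDegree ≤ n - 1)
    (hP : P = ∑ m, A m * B m) :
    (∫ x, P.eval x * f x ∂μ) =
      ∑ i, lam i *
        (∑ m, (∫ x, (A m).eval x * (ψ i).eval x ∂μ) * (∫ x, (B m).eval x * (ψ i).eval x ∂μ)) := by
  obtain ⟨hdeg, horth, horthf⟩ := heb
  choose aA haA using fun m => exists_rep n hn μ hmom ψ hdeg horth (A m) (hA m)
  choose aB haB using fun m => exists_rep n hn μ hmom ψ hdeg horth (B m) (hB m)
  have hdeg2 : ∀ i j : Fin n, (ψ i * ψ j).natDegree ≤ 2 * n - 2 := by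
    intro i j
    refine le_trans (Polynomial.natDegree_mul_le) ?_
    have := hdeg i; have := hdeg j; omega
  have hint_ppf : ∀ i j : Fin n,
      Integrable (fun x => (ψ i).eval x * (ψ j).eval x * f x) μ := by
    intro i j
    simpa [Polynomial.eval_mul] using
      integrable_polyEval_mul_f n μ f hfint (ψ i * ψ j) (hdeg2 i j)
  have key : ∀ m, (∫ x, (A m).eval x * (B m).eval x * f x ∂μ)
      = ∑ i, lam i * (aA m i * aB m i) := by
    intro m
    have hpt : (fun x : ℝ => (A m).eval x * (B m).eval x * f x)
        = fun x => ∑ p : Fin n × Fin n,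
            (aA m p.1 * aB m p.2) * ((ψ p.1).eval x * (ψ p.2).eval x * f x) := by
      funext x
      rw [Fintype.sum_prod_type, haA m, haB m]
      simp only [Polynomial.eval_finset_sum, Polynomial.eval_smul, smul_eq_mul,
        Finset.sum_mul, Finset.mul_sum]
      rw [Finset.sum_comm]
      exact Finset.sum_congr rfl fun i _ => Finset.sum_congr rfl fun j _ => by ring
    rw [hpt, integral_finset_sum _ (fun p _ => (hint_ppf p.1 p.2).const_mul _)]
    simp only [integral_const_mul, horthf]
    rw [Fintype.sum_prod_type]
    simp only [mul_ite, mul_zero, Finset.sum_ite_eq, Finset.mem_univ, if_true]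
    exact Finset.sum_congr rfl fun i _ => by ring
  have hsplit : (∫ x, P.eval x * f x ∂μ)
      = ∑ m, ∫ x, (A m).eval x * (B m).eval x * f x ∂μ := by
    have hpt : (fun x : ℝ => P.eval x * f x)
        = fun x => ∑ m, ((A m).eval x * (B m).eval x * f x) := by
      funext x
      rw [hP]
      simp [Polynomial.eval_finset_sum, Finset.sum_mul, mul_assoc]
    rw [hpt]
    refine integral_finset_sum _ fun m _ => ?_
    have hABdeg : (A m * B m).natDegree ≤ 2 * n - 2 := by
      refine le_trans (Polynomial.natDegree_mul_le) ?_
      have := hA m; have := hB m; omega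
    simpa [Polynomial.eval_mul] using
      integrable_polyEval_mul_f n μ f hfint (A m * B m) hABdeg
  have hAint : ∀ m i, (∫ x, (A m).eval x * (ψ i).eval x ∂μ) = aA m i :=
    fun m i => integral_rep μ hmom ψ horth (aA m) (A m) (haA m) i
  have hBint : ∀ m i, (∫ x, (B m).eval x * (ψ i).eval x ∂μ) = aB m i :=
    fun m i => integral_rep μ hmom ψ horth (aB m) (B m) (haB m) i
  rw [hsplit]
  simp only [key, hAint, hBint]
  rw [Finset.sum_comm]
  exact Finset.sum_congr rfl fun i _ => by rw [Finset.mul_sum]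
end

section
/- Let (ψ_i, λ_i) be a Lebesgue eigenbasis for (μ, f, n) with f(x) = x, and suppose also that the polynomials 1, x, …, x^n are linearly independent in L²(μ). Then the λ_i are pairwise distinct and are exactly the n roots of the monic degree-n polynomial π_n that is orthogonal in L²(μ) to every polynomial of degree ≤ n−1, and for each i the polynomial (x − λ_i) ψ_i(x) is a nonzero scalar multiple of π_n(x). -/
open MeasureTheory Polynomial

lemma integrable_poly_eval (μ : Measure ℝ) (hmom : ∀ k : ℕ, Integrable (fun x => |x| ^ k) μ)
    (p : Polynomial ℝ) : Integrable (fun x => p.eval x) μ := by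
  have hkint : ∀ k : ℕ, Integrable (fun x : ℝ => x ^ k) μ := fun k =>
    (hmom k).mono' (continuous_pow k).aestronglyMeasurable
      (Filter.Eventually.of_forall fun x => by
        rw [Real.norm_eq_abs, abs_pow])
  have h : (fun x => p.eval x) =
      fun x => ∑ k ∈ Finset.range (p.natDegree + 1), p.coeff k * x ^ k := by
    funext x; exact p.eval_eq_sum_range x
  rw [h]
  exact integrable_finset_sum _ fun k _ => (hkint k).const_mul _

lemma poly_sq_integral_pos {m : ℕ} (μ : Measure ℝ)
    (hmom : ∀ k : ℕ, Integrable (fun x => |x| ^ k) μ)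
    (hg : (Matrix.of fun j k : Fin m => ∫ x, x ^ ((j : ℕ) + (k : ℕ)) ∂μ).PosDef)
    (p : Polynomial ℝ) (hp : p.natDegree < m) (hp0 : p ≠ 0) :
    0 < ∫ x, p.eval x * p.eval x ∂μ := by
  have hkint : ∀ k : ℕ, Integrable (fun x : ℝ => x ^ k) μ := fun k =>
    (hmom k).mono' (continuous_pow k).aestronglyMeasurable
      (Filter.Eventually.of_forall fun x => by rw [Real.norm_eq_abs, abs_pow])
  set v : Fin m → ℝ := fun j => p.coeff j with hv
  have hvne : v ≠ 0 := by
    intro h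
    have h2 : p.coeff p.natDegree = 0 := congrFun h ⟨p.natDegree, hp⟩
    exact Polynomial.leadingCoeff_ne_zero.mpr hp0 h2
  have heval : ∀ x : ℝ, p.eval x = ∑ j : Fin m, v j * x ^ (j : ℕ) := by
    intro x
    rw [Polynomial.eval_eq_sum_range' hp, ← Fin.sum_univ_eq_sum_range]
  have hsum : (fun x => p.eval x * p.eval x) =
      fun x => ∑ j : Fin m, ∑ k : Fin m, v j * v k * x ^ ((j : ℕ) + (k : ℕ)) := by
    funext x
    rw [heval x, Finset.sum_mul_sum]
    refine Finset.sum_congr rfl fun j _ => Finset.sum_congr rfl fun k _ => ?_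
    rw [pow_add]; ring
  have hcalc : (∫ x, p.eval x * p.eval x ∂μ)
      = ∑ j : Fin m, ∑ k : Fin m, v j * v k * ∫ x, x ^ ((j : ℕ) + (k : ℕ)) ∂μ := by
    rw [hsum, integral_finset_sum _ fun j _ =>
      integrable_finset_sum _ fun k _ => (hkint _).const_mul _]
    refine Finset.sum_congr rfl fun j _ => ?_
    rw [integral_finset_sum _ fun k _ => (hkint _).const_mul _]
    exact Finset.sum_congr rfl fun k _ => integral_const_mul _ _
  have hdot := hg.dotProduct_mulVec_pos hvne
  rw [hcalc]
  convert hdot using 1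
  · rfl
  simp only [dotProduct, Matrix.mulVec, Matrix.of_apply, star_trivial, Pi.star_apply]
  rw [Finset.sum_comm]
  refine Finset.sum_congr rfl fun j _ => ?_
  rw [Finset.mul_sum]
  refine Finset.sum_congr rfl fun k _ => ?_
  rw [add_comm (k : ℕ) (j : ℕ)]; ring

/-- for `f(x) = x` the eigenvalues are pairwise distinct and are exactly
the roots of the monic degree-`n` orthogonal polynomial `π_n`; moreover
`(x - lam i) * ψ i` is a nonzero scalar multiple of `π_n`. -/
theorem lebesgue_eigenbasis_gaussian_nodes (n : ℕ) (hn : 1 ≤ n) (μ : Measure ℝ)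
    (hmom : ∀ k : ℕ, Integrable (fun x => |x| ^ k) μ)
    (hgram : (Matrix.of fun j k : Fin n => ∫ x, x ^ ((j : ℕ) + (k : ℕ)) ∂μ).PosDef)
    (hgram' : (Matrix.of fun j k : Fin (n + 1) => ∫ x, x ^ ((j : ℕ) + (k : ℕ)) ∂μ).PosDef)
    (ψ : Fin n → Polynomial ℝ) (lam : Fin n → ℝ)
    (heb : LebesgueEigenbasis μ (fun x => x) n ψ lam) :
    Function.Injective lam ∧
    ∃ π : Polynomial ℝ, π.Monic ∧ π.natDegree = n ∧
      (∀ q : Polynomial ℝ, q.natDegree ≤ n - 1 → (∫ x, π.eval x * q.eval x ∂μ) = 0) ∧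
      (∀ x : ℝ, π.eval x = 0 ↔ ∃ i, lam i = x) ∧
      (∀ i, ∃ c : ℝ, c ≠ 0 ∧ (X - C (lam i)) * ψ i = C c * π) := by
  obtain ⟨hdeg, horth, heig0⟩ := heb
  have heig : ∀ i j, (∫ x, (ψ i).eval x * (ψ j).eval x * x ∂μ)
      = if i = j then lam i else 0 := heig0
  have hint : ∀ p : Polynomial ℝ, Integrable (fun x => p.eval x) μ :=
    integrable_poly_eval μ hmom
  have hintmul : ∀ p q : Polynomial ℝ, Integrable (fun x => p.eval x * q.eval x) μ := by
    intro p q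
    have := hint (p * q)
    simpa [Polynomial.eval_mul] using this
  -- ψ i ≠ 0
  have hψ0 : ∀ i, ψ i ≠ 0 := by
    intro i h
    have h1 := horth i i
    rw [if_pos rfl] at h1
    simp [h] at h1
  -- degree bound
  have hdlt : ∀ i, (ψ i).degree < (n : ℕ) := by
    intro i
    have h1 : (ψ i).degree ≤ ((n - 1 : ℕ) : WithBot ℕ) :=
      Polynomial.degree_le_natDegree.trans (by exact_mod_cast Nat.cast_le.mpr (hdeg i))
    exact h1.trans_lt (by exact_mod_cast Nat.cast_lt.mpr (Nat.sub_lt hn one_pos))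
  -- span of ψ contains all polynomials of degree < n
  have hspan : ∀ q : Polynomial ℝ, q.degree < (n : ℕ) →
      q ∈ Submodule.span ℝ (Set.range ψ) := by
    intro q hq
    set ψ' : Fin n → Polynomial.degreeLT ℝ n :=
      fun i => ⟨ψ i, Polynomial.mem_degreeLT.mpr (hdlt i)⟩ with hψ'
    have hli : LinearIndependent ℝ ψ' := by
      rw [Fintype.linearIndependent_iff]
      intro g hg i
      have hg' : ∑ j, g j • ψ j = 0 := by
        have := congrArg (Submodule.subtype _) hg
        simpa [hψ'] using this
      have h1 : (∫ x, (∑ j, g j • ψ j).eval x * (ψ i).eval x ∂μ) = g i := by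
        have he : ∀ x : ℝ, (∑ j, g j • ψ j).eval x * (ψ i).eval x
            = ∑ j, g j * ((ψ j).eval x * (ψ i).eval x) := by
          intro x
          rw [Polynomial.eval_finset_sum, Finset.sum_mul]
          refine Finset.sum_congr rfl fun j _ => ?_
          simp [mul_assoc]
        simp only [he]
        rw [integral_finset_sum _ fun j _ => (hintmul (ψ j) (ψ i)).const_mul _]
        have : ∀ j : Fin n, (∫ x, g j * ((ψ j).eval x * (ψ i).eval x) ∂μ)
            = g j * if j = i then 1 else 0 := by
          intro j; rw [integral_const_mul, horth j i]
        simp only [this]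
        simp [Finset.sum_ite_eq']
      rw [hg'] at h1
      simpa using h1.symm
    haveI : Nonempty (Fin n) := ⟨⟨0, hn⟩⟩
    have hcard : Fintype.card (Fin n) = Module.finrank ℝ (Polynomial.degreeLT ℝ n) := by
      rw [Fintype.card_fin, (Polynomial.degreeLTEquiv ℝ n).finrank_eq, Module.finrank_fin_fun]
    have hsp : Submodule.span ℝ (Set.range ψ') = ⊤ :=
      hli.span_eq_top_of_card_eq_finrank hcard
    have hqmem : (⟨q, Polynomial.mem_degreeLT.mpr hq⟩ : Polynomial.degreeLT ℝ n)
        ∈ Submodule.span ℝ (Set.range ψ') := by rw [hsp]; trivial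
    have := Submodule.mem_map_of_mem (f := (Polynomial.degreeLT ℝ n).subtype) hqmem
    rw [← Submodule.span_image] at this
    have himg : (Polynomial.degreeLT ℝ n).subtype '' Set.range ψ' = Set.range ψ := by
      rw [← Set.range_comp]; rfl
    rwa [himg] at this
  -- orthogonality extends over the span
  have hBspan : ∀ φ : Polynomial ℝ, (∀ j, (∫ x, φ.eval x * (ψ j).eval x ∂μ) = 0) →
      ∀ q : Polynomial ℝ, q.degree < (n : ℕ) → (∫ x, φ.eval x * q.eval x ∂μ) = 0 := by
    intro φ hφ q hq
    refine Submodule.span_induction ?_ ?_ ?_ ?_ (hspan q hq)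
    · rintro _ ⟨j, rfl⟩; exact hφ j
    · simp
    · intro a b _ _ ha hb
      have : ∀ x : ℝ, φ.eval x * (a + b).eval x
          = φ.eval x * a.eval x + φ.eval x * b.eval x := by
        intro x; simp [mul_add]
      simp only [this]
      rw [integral_add (hintmul φ a) (hintmul φ b), ha, hb, add_zero]
    · intro c a _ ha
      have : ∀ x : ℝ, φ.eval x * (c • a).eval x = c * (φ.eval x * a.eval x) := by
        intro x; simp; ring
      simp only [this]
      rw [integral_const_mul, ha, mul_zero]
  -- the polynomials φ i
  set φ : Fin n → Polynomial ℝ := fun i => (X - C (lam i)) * ψ i with hφdef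
  have hφeval : ∀ i (x : ℝ), (φ i).eval x = (x - lam i) * (ψ i).eval x := by
    intro i x; simp [hφdef]
  have hφorthψ : ∀ i j, (∫ x, (φ i).eval x * (ψ j).eval x ∂μ) = 0 := by
    intro i j
    have he : ∀ x : ℝ, (φ i).eval x * (ψ j).eval x
        = (ψ i).eval x * (ψ j).eval x * x - lam i * ((ψ i).eval x * (ψ j).eval x) := by
      intro x; rw [hφeval]; ring
    simp only [he]
    have h1 : Integrable (fun x => (ψ i).eval x * (ψ j).eval x * x) μ := by
      have := hint (ψ i * ψ j * X)
      simpa [Polynomial.eval_mul, mul_assoc] using this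
    rw [integral_sub h1 ((hintmul (ψ i) (ψ j)).const_mul _), integral_const_mul,
      heig i j, horth i j]
    split_ifs <;> ring
  have hφorth : ∀ i (q : Polynomial ℝ), q.degree < (n : ℕ) →
      (∫ x, (φ i).eval x * q.eval x ∂μ) = 0 :=
    fun i => hBspan (φ i) (hφorthψ i)
  have hφ0 : ∀ i, φ i ≠ 0 := fun i =>
    mul_ne_zero (Polynomial.X_sub_C_ne_zero (lam i)) (hψ0 i)
  have hφdegle : ∀ i, (φ i).natDegree ≤ n := by
    intro i
    rw [hφdef]
    simp only []
    rw [Polynomial.natDegree_mul (Polynomial.X_sub_C_ne_zero (lam i)) (hψ0 i),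
      Polynomial.natDegree_X_sub_C]
    have := hdeg i; omega
  have hφdeg : ∀ i, (φ i).natDegree = n := by
    intro i
    by_contra h
    have hlt : (φ i).natDegree < n := lt_of_le_of_ne (hφdegle i) h
    have hdl : (φ i).degree < (n : ℕ) :=
      (Polynomial.natDegree_lt_iff_degree_lt (hφ0 i)).mp hlt
    have hpos := poly_sq_integral_pos μ hmom hgram (φ i) hlt (hφ0 i)
    rw [hφorth i (φ i) hdl] at hpos
    exact lt_irrefl 0 hpos
  -- leading coefficients
  set c : Fin n → ℝ := fun i => (φ i).leadingCoeff with hcdef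
  have hc0 : ∀ i, c i ≠ 0 := fun i => Polynomial.leadingCoeff_ne_zero.mpr (hφ0 i)
  -- define π
  set i0 : Fin n := ⟨0, hn⟩ with hi0
  set π : Polynomial ℝ := C (c i0)⁻¹ * φ i0 with hπdef
  have hπ0 : π ≠ 0 :=
    mul_ne_zero (Polynomial.C_ne_zero.mpr (inv_ne_zero (hc0 i0))) (hφ0 i0)
  have hπmonic : π.Monic := by
    unfold Polynomial.Monic
    rw [hπdef, Polynomial.leadingCoeff_mul, Polynomial.leadingCoeff_C]
    exact inv_mul_cancel₀ (hc0 i0)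
  have hπnat : π.natDegree = n := by
    rw [hπdef, Polynomial.natDegree_mul (Polynomial.C_ne_zero.mpr (inv_ne_zero (hc0 i0)))
      (hφ0 i0), Polynomial.natDegree_C, hφdeg i0, zero_add]
  have hπorth : ∀ q : Polynomial ℝ, q.degree < (n : ℕ) →
      (∫ x, π.eval x * q.eval x ∂μ) = 0 := by
    intro q hq
    have he : ∀ x : ℝ, π.eval x * q.eval x = (c i0)⁻¹ * ((φ i0).eval x * q.eval x) := by
      intro x; rw [hπdef]; simp; ring
    simp only [he]
    rw [integral_const_mul, hφorth i0 q hq, mul_zero]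
  -- each φ i is a multiple of π
  have hkey : ∀ i, φ i = C (c i) * π := by
    intro i
    set r : Polynomial ℝ := φ i - C (c i) * π with hrdef
    have hCπ0 : C (c i) * π ≠ 0 :=
      mul_ne_zero (Polynomial.C_ne_zero.mpr (hc0 i)) hπ0
    have hrorth : ∀ q : Polynomial ℝ, q.degree < (n : ℕ) →
        (∫ x, r.eval x * q.eval x ∂μ) = 0 := by
      intro q hq
      have he : ∀ x : ℝ, r.eval x * q.eval x
          = (φ i).eval x * q.eval x - c i * (π.eval x * q.eval x) := by
        intro x; rw [hrdef]; simp; ring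
      simp only [he]
      have h2 : Integrable (fun x => c i * (π.eval x * q.eval x)) μ :=
        (hintmul π q).const_mul _
      rw [integral_sub (hintmul (φ i) q) h2, integral_const_mul, hφorth i q hq,
        hπorth q hq, mul_zero, sub_zero]
    have hrdeglt : r.degree < (n : ℕ) := by
      rcases eq_or_ne r 0 with h | h
      · rw [h, Polynomial.degree_zero]
        exact bot_lt_iff_ne_bot.mpr (by simp)
      · have hd1 : (φ i).degree = (C (c i) * π).degree := by
          rw [Polynomial.degree_eq_natDegree (hφ0 i),
            Polynomial.degree_eq_natDegree hCπ0, hφdeg i,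
            Polynomial.natDegree_mul (Polynomial.C_ne_zero.mpr (hc0 i)) hπ0,
            Polynomial.natDegree_C, hπnat, zero_add]
        have hlc : (φ i).leadingCoeff = (C (c i) * π).leadingCoeff := by
          have hrhs : (C (c i) * π).leadingCoeff = c i := by
            rw [Polynomial.leadingCoeff_mul (C (c i)) π, Polynomial.leadingCoeff_C,
              hπmonic.leadingCoeff, mul_one]
          rw [hrhs]
        have := Polynomial.degree_sub_lt hd1 (hφ0 i) hlc
        rw [← hrdef] at this
        refine this.trans_le ?_
        rw [Polynomial.degree_eq_natDegree (hφ0 i), hφdeg i]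
    rcases eq_or_ne r 0 with h | h
    · rw [hrdef] at h; exact sub_eq_zero.mp h
    · exfalso
      have hnatlt : r.natDegree < n := (Polynomial.natDegree_lt_iff_degree_lt h).mpr hrdeglt
      have hpos := poly_sq_integral_pos μ hmom hgram r hnatlt h
      rw [hrorth r hrdeglt] at hpos
      exact lt_irrefl 0 hpos
  -- injectivity
  have hinj : Function.Injective lam := by
    intro i j hij
    by_contra hne
    have e1 : (X - C (lam i)) * ψ i = C (c i) * π := hkey i
    have e2 : (X - C (lam j)) * ψ j = C (c j) * π := hkey j
    rw [← hij] at e2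
    have h1 : (X - C (lam i)) * (C (c j) * ψ i - C (c i) * ψ j) = 0 := by
      have ha : (X - C (lam i)) * (C (c j) * ψ i) = C (c j) * ((X - C (lam i)) * ψ i) := by
        ring
      have hb : (X - C (lam i)) * (C (c i) * ψ j) = C (c i) * ((X - C (lam i)) * ψ j) := by
        ring
      rw [mul_sub, ha, hb, e1, e2]
      ring
    have h2 : C (c j) * ψ i = C (c i) * ψ j := by
      rcases mul_eq_zero.mp h1 with h | h
      · exact absurd h (Polynomial.X_sub_C_ne_zero (lam i))
      · exact sub_eq_zero.mp h
    have h3 : (∫ x, (C (c j) * ψ i).eval x * (ψ i).eval x ∂μ) = c j := by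
      have he : ∀ x : ℝ, (C (c j) * ψ i).eval x * (ψ i).eval x
          = c j * ((ψ i).eval x * (ψ i).eval x) := by intro x; simp; ring
      simp only [he]
      rw [integral_const_mul, horth i i, if_pos rfl, mul_one]
    have h4 : (∫ x, (C (c i) * ψ j).eval x * (ψ i).eval x ∂μ) = 0 := by
      have he : ∀ x : ℝ, (C (c i) * ψ j).eval x * (ψ i).eval x
          = c i * ((ψ j).eval x * (ψ i).eval x) := by intro x; simp; ring
      simp only [he]
      rw [integral_const_mul, horth j i, if_neg (fun hh => hne hh.symm), mul_zero]
    rw [h2, h4] at h3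
    exact hc0 j h3.symm
  -- roots of π
  have hroot : ∀ i, π.eval (lam i) = 0 := by
    intro i
    have := hkey i
    have h := congrArg (Polynomial.eval (lam i)) this
    rw [hφeval] at h
    simp at h
    rcases h with h | h
    · exact absurd h (hc0 i)
    · exact h
  have hprod : π = ∏ i : Fin n, (X - C (lam i)) := by
    have hdvd : (∏ i : Fin n, (X - C (lam i))) ∣ π :=
      Fintype.prod_dvd_of_coprime (Polynomial.pairwise_coprime_X_sub_C hinj)
        (fun i => Polynomial.dvd_iff_isRoot.mpr (hroot i))
    obtain ⟨u, hu⟩ := hdvd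
    have hpm : (∏ i : Fin n, (X - C (lam i))).Monic :=
      monic_prod_of_monic _ _ fun i _ => Polynomial.monic_X_sub_C _
    have hpn : (∏ i : Fin n, (X - C (lam i))).natDegree = n := by
      rw [Polynomial.natDegree_prod _ _ fun i _ => Polynomial.X_sub_C_ne_zero (lam i)]
      simp
    have hu0 : u ≠ 0 := by
      intro h; rw [h, mul_zero] at hu; exact hπ0 hu
    have hun : u.natDegree = 0 := by
      have h := congrArg Polynomial.natDegree hu
      rw [Polynomial.natDegree_mul hpm.ne_zero hu0, hpn, hπnat] at h
      omega
    have hum : u.Monic := by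
      have h := congrArg Polynomial.leadingCoeff hu
      rw [Polynomial.leadingCoeff_mul (∏ i : Fin n, (X - C (lam i))) u, hpm.leadingCoeff,
        one_mul, hπmonic.leadingCoeff] at h
      exact h.symm
    rw [hu, hum.natDegree_eq_zero.mp hun, mul_one]
  refine ⟨hinj, π, hπmonic, hπnat, ?_, ?_, ?_⟩
  · intro q hq
    rcases eq_or_ne q 0 with h | h
    · simp [h]
    · refine hπorth q ?_
      have h1 : q.degree ≤ ((n - 1 : ℕ) : WithBot ℕ) :=
        Polynomial.degree_le_natDegree.trans (by exact_mod_cast Nat.cast_le.mpr hq)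
      exact h1.trans_lt (by exact_mod_cast Nat.cast_lt.mpr (Nat.sub_lt hn one_pos))
  · intro x
    rw [hprod]
    rw [Polynomial.eval_prod]
    rw [Finset.prod_eq_zero_iff]
    constructor
    · rintro ⟨i, -, hi⟩
      exact ⟨i, by simpa [sub_eq_zero, eq_comm] using hi⟩
    · rintro ⟨i, hi⟩
      exact ⟨i, Finset.mem_univ i, by simp [sub_eq_zero, hi]⟩
  · intro i
    exact ⟨c i, hc0 i, hkey i⟩
end

section
/- (Bound preservation of the Radon–Nikodym estimator.) Let (ψ_i, λ_i) be a Lebesgue eigenbasis for (μ, f, n) and suppose f_L ≤ f(x) ≤ f_H for μ-almost every x. Then for every x ∈ ℝ one has Σ_{i=0}^{n−1} ψ_i(x)² > 0 and f_L ≤ (Σ_{i=0}^{n−1} λ_i ψ_i(x)²) / (Σ_{i=0}^{n−1} ψ_i(x)²) ≤ f_H. -/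
open MeasureTheory Polynomial

/-- bound preservation of the Radon–Nikodym estimator. -/
theorem radon_nikodym_estimator_bounded (n : ℕ) (hn : 1 ≤ n) (μ : Measure ℝ)
    (hmom : ∀ k : ℕ, Integrable (fun x => |x| ^ k) μ)
    (hgram : (Matrix.of fun j k : Fin n => ∫ x, x ^ ((j : ℕ) + (k : ℕ)) ∂μ).PosDef)
    (f : ℝ → ℝ) (hf : Measurable f)
    (hfint : ∀ m ≤ 2 * n - 2, Integrable (fun x => f x * x ^ m) μ)
    (ψ : Fin n → Polynomial ℝ) (lam : Fin n → ℝ)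
    (heb : LebesgueEigenbasis μ f n ψ lam)
    (fL fH : ℝ) (hbound : ∀ᵐ x ∂μ, fL ≤ f x ∧ f x ≤ fH) (x : ℝ) :
    0 < ∑ i, ((ψ i).eval x) ^ 2 ∧
    fL ≤ (∑ i, lam i * ((ψ i).eval x) ^ 2) / (∑ i, ((ψ i).eval x) ^ 2) ∧
    (∑ i, lam i * ((ψ i).eval x) ^ 2) / (∑ i, ((ψ i).eval x) ^ 2) ≤ fH := by
  obtain ⟨hdeg, horth, heig⟩ := heb
  -- integrability of powers
  have hxpow : ∀ k : ℕ, Integrable (fun x : ℝ => x ^ k) μ := by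
    intro k
    refine (hmom k).mono' (Measurable.aestronglyMeasurable (by measurability)) ?_
    filter_upwards with y
    simp [abs_pow]
  -- integrability of polynomials
  have hpoly_int : ∀ p : Polynomial ℝ, Integrable (fun x => p.eval x) μ := by
    intro p
    have : (fun x => p.eval x) =
        fun x => ∑ i ∈ Finset.range (p.natDegree + 1), p.coeff i * x ^ i := by
      funext y; rw [eval_eq_sum_range]
    rw [this]
    exact integrable_finset_sum _ fun i _ => (hxpow i).const_mul _
  -- integrability of polynomial times f (for degree ≤ 2n-2)
  have hpolyf_int : ∀ p : Polynomial ℝ, p.natDegree ≤ 2 * n - 2 →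
      Integrable (fun x => p.eval x * f x) μ := by
    intro p hp
    have : (fun x => p.eval x * f x) =
        fun x => ∑ i ∈ Finset.range (p.natDegree + 1), p.coeff i * (f x * x ^ i) := by
      funext y; rw [eval_eq_sum_range, Finset.sum_mul]
      exact Finset.sum_congr rfl fun i _ => by ring
    rw [this]
    refine integrable_finset_sum _ fun i hi => ?_
    have : i ≤ 2 * n - 2 := le_trans (Nat.lt_succ_iff.mp (Finset.mem_range.mp hi)) hp
    exact (hfint i this).const_mul _
  have hdeg2 : ∀ i j : Fin n, ((ψ i) * (ψ j)).natDegree ≤ 2 * n - 2 := by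
    intro i j
    refine le_trans (natDegree_mul_le) ?_
    have := hdeg i; have := hdeg j; omega
  have hψψ_int : ∀ i j : Fin n, Integrable (fun x => (ψ i).eval x * (ψ j).eval x) μ := by
    intro i j
    have := hpoly_int ((ψ i) * (ψ j))
    simpa [eval_mul] using this
  have hψψf_int : ∀ i j : Fin n,
      Integrable (fun x => (ψ i).eval x * (ψ j).eval x * f x) μ := by
    intro i j
    have := hpolyf_int ((ψ i) * (ψ j)) (hdeg2 i j)
    simpa [eval_mul] using this
  -- eigenvalue bounds
  have hlamL : ∀ i : Fin n, fL ≤ lam i := by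
    intro i
    have h0 : 0 ≤ ∫ y, ((ψ i).eval y * (ψ i).eval y) * (f y - fL) ∂μ := by
      refine integral_nonneg_of_ae ?_
      filter_upwards [hbound] with y hy
      exact mul_nonneg (mul_self_nonneg _) (sub_nonneg.mpr hy.1)
    have hsplit : ∫ y, ((ψ i).eval y * (ψ i).eval y) * (f y - fL) ∂μ = lam i - fL := by
      have : (fun y => ((ψ i).eval y * (ψ i).eval y) * (f y - fL)) =
          fun y => ((ψ i).eval y * (ψ i).eval y * f y) -
            fL * ((ψ i).eval y * (ψ i).eval y) := by
        funext y; ring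
      rw [this, integral_sub (hψψf_int i i) ((hψψ_int i i).const_mul fL),
        integral_const_mul, horth i i, heig i i]
      simp
    linarith [hsplit ▸ h0]
  have hlamH : ∀ i : Fin n, lam i ≤ fH := by
    intro i
    have h0 : 0 ≤ ∫ y, ((ψ i).eval y * (ψ i).eval y) * (fH - f y) ∂μ := by
      refine integral_nonneg_of_ae ?_
      filter_upwards [hbound] with y hy
      exact mul_nonneg (mul_self_nonneg _) (sub_nonneg.mpr hy.2)
    have hsplit : ∫ y, ((ψ i).eval y * (ψ i).eval y) * (fH - f y) ∂μ = fH - lam i := by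
      have : (fun y => ((ψ i).eval y * (ψ i).eval y) * (fH - f y)) =
          fun y => fH * ((ψ i).eval y * (ψ i).eval y) -
            ((ψ i).eval y * (ψ i).eval y * f y) := by
        funext y; ring
      rw [this, integral_sub ((hψψ_int i i).const_mul fH) (hψψf_int i i),
        integral_const_mul, horth i i, heig i i]
      simp
    linarith [hsplit ▸ h0]
  -- positivity of the sum of squares
  have hmem : ∀ i : Fin n, ψ i ∈ Polynomial.degreeLT ℝ n := by
    intro i
    rw [Polynomial.mem_degreeLT]
    calc (ψ i).degree ≤ ((ψ i).natDegree : WithBot ℕ) := degree_le_natDegree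
      _ ≤ ((n - 1 : ℕ) : WithBot ℕ) := by exact_mod_cast hdeg i
      _ < (n : WithBot ℕ) := by exact_mod_cast Nat.sub_lt hn one_pos
  set v : Fin n → Polynomial.degreeLT ℝ n := fun i => ⟨ψ i, hmem i⟩ with hv
  have hlin : LinearIndependent ℝ v := by
    rw [Fintype.linearIndependent_iff]
    intro g hg i
    have hg' : (∑ j, g j • ψ j) = 0 := by
      have := congrArg (Subtype.val) hg
      simpa [v] using this
    have hzero : ∫ y, (∑ j, g j * ((ψ j).eval y * (ψ i).eval y)) ∂μ = 0 := by
      have : (fun y => ∑ j, g j * ((ψ j).eval y * (ψ i).eval y)) = fun _ => (0 : ℝ) := by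
        funext y
        have := congrArg (fun p => Polynomial.eval y p * (ψ i).eval y) hg'
        simpa [eval_finset_sum, Finset.sum_mul, mul_assoc] using this
      rw [this, integral_zero]
    rw [integral_finset_sum _ fun j _ => ((hψψ_int j i).const_mul (g j))] at hzero
    have : ∀ j, ∫ y, g j * ((ψ j).eval y * (ψ i).eval y) ∂μ =
        if j = i then g j else 0 := by
      intro j
      rw [integral_const_mul, horth j i]
      by_cases h : j = i <;> simp [h]
    simp only [this] at hzero
    simpa using hzero
  have hfr : Fintype.card (Fin n) = Module.finrank ℝ (Polynomial.degreeLT ℝ n) := by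
    rw [(Polynomial.degreeLTEquiv ℝ n).finrank_eq]; simp
  haveI : Nonempty (Fin n) := ⟨⟨0, hn⟩⟩
  let b := basisOfLinearIndependentOfCardEqFinrank hlin hfr
  have hb : ⇑b = v := coe_basisOfLinearIndependentOfCardEqFinrank hlin hfr
  have hone : (1 : Polynomial ℝ) ∈ Polynomial.degreeLT ℝ n := by
    rw [Polynomial.mem_degreeLT, Polynomial.degree_one]
    exact_mod_cast Nat.pos_of_ne_zero (by omega)
  have hrepr := b.sum_repr ⟨(1 : Polynomial ℝ), hone⟩
  have hS : 0 < ∑ i, ((ψ i).eval x) ^ 2 := by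
    by_contra hS
    push_neg at hS
    have hnn : 0 ≤ ∑ i, ((ψ i).eval x) ^ 2 := Finset.sum_nonneg fun i _ => sq_nonneg _
    have hsum0 : ∑ i, ((ψ i).eval x) ^ 2 = 0 := le_antisymm hS hnn
    have hall' : ∀ i : Fin n, (ψ i).eval x = 0 := by
      intro i
      have := (Finset.sum_eq_zero_iff_of_nonneg (fun i _ => sq_nonneg ((ψ i).eval x))).mp
        hsum0 i (Finset.mem_univ i)
      exact pow_eq_zero_iff two_ne_zero |>.mp this
    have hcoe := congrArg Subtype.val hrepr
    have hpoly : (∑ i, (b.repr ⟨1, hone⟩) i • ψ i) = (1 : Polynomial ℝ) := by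
      simpa [hb, v] using hcoe
    have := congrArg (Polynomial.eval x) hpoly
    simp [eval_finset_sum, hall'] at this
  refine ⟨hS, ?_, ?_⟩
  · rw [le_div_iff₀ hS]
    calc fL * ∑ i, ((ψ i).eval x) ^ 2 = ∑ i, fL * ((ψ i).eval x) ^ 2 := Finset.mul_sum _ _ _
      _ ≤ ∑ i, lam i * ((ψ i).eval x) ^ 2 :=
        Finset.sum_le_sum fun i _ => mul_le_mul_of_nonneg_right (hlamL i) (sq_nonneg _)
  · rw [div_le_iff₀ hS]
    calc ∑ i, lam i * ((ψ i).eval x) ^ 2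
        ≤ ∑ i, fH * ((ψ i).eval x) ^ 2 :=
        Finset.sum_le_sum fun i _ => mul_le_mul_of_nonneg_right (hlamH i) (sq_nonneg _)
      _ = fH * ∑ i, ((ψ i).eval x) ^ 2 := (Finset.mul_sum _ _ _).symm
end

section
/- (Principal components expansion of the least-squares residual.) Suppose additionally ∫ f² dμ < ∞, and let f_LS denote the orthogonal projection in L²(μ) of f onto the linear span of 1, x, …, x^{n−1}. Then for every Lebesgue eigenbasis (ψ_i, λ_i) for (μ, f, n): ∫ (f − f_LS)² dμ = ∫ f² dμ − Σ_{i=0}^{n−1} λ_i² w^[i], where w^[i] = (∫ ψ_i dμ)². -/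
open MeasureTheory Polynomial

/-- principal components expansion of the least-squares residual. -/
theorem least_squares_residual_pca (n : ℕ) (hn : 1 ≤ n) (μ : Measure ℝ)
    (hmom : ∀ k : ℕ, Integrable (fun x => |x| ^ k) μ)
    (hgram : (Matrix.of fun j k : Fin n => ∫ x, x ^ ((j : ℕ) + (k : ℕ)) ∂μ).PosDef)
    (f : ℝ → ℝ) (hf : Measurable f)
    (hfint : ∀ m ≤ 2 * n - 2, Integrable (fun x => f x * x ^ m) μ)
    (ψ : Fin n → Polynomial ℝ) (lam : Fin n → ℝ)
    (heb : LebesgueEigenbasis μ f n ψ lam)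
    (hf2 : Integrable (fun x => (f x) ^ 2) μ)
    (fLS : Polynomial ℝ) (hLSdeg : fLS.natDegree ≤ n - 1)
    (hLSproj : ∀ q : Polynomial ℝ, q.natDegree ≤ n - 1 →
      (∫ x, (f x - fLS.eval x) * q.eval x ∂μ) = 0) :
    (∫ x, (f x - fLS.eval x) ^ 2 ∂μ) =
      (∫ x, (f x) ^ 2 ∂μ) - ∑ i, (lam i) ^ 2 * (∫ x, (ψ i).eval x ∂μ) ^ 2 := by
  obtain ⟨hdeg, hO, hE⟩ := heb
  -- integrability of monomials
  have hxk : ∀ k : ℕ, Integrable (fun x : ℝ => x ^ k) μ := by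
    intro k
    refine (hmom k).mono' (measurable_id.pow_const k).aestronglyMeasurable ?_
    filter_upwards with x
    simp [abs_pow]
  -- integrability of polynomials
  have hP1 : ∀ p : Polynomial ℝ, Integrable (fun x => p.eval x) μ := by
    intro p
    have h : (fun x : ℝ => p.eval x)
        = fun x => ∑ k ∈ Finset.range (p.natDegree + 1), p.coeff k * x ^ k := by
      funext x; rw [Polynomial.eval_eq_sum_range]
    rw [h]
    exact integrable_finset_sum _ fun k _ => (hxk k).const_mul _
  have hP2 : ∀ p : Polynomial ℝ, p.natDegree ≤ 2 * n - 2 →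
      Integrable (fun x => f x * p.eval x) μ := by
    intro p hp
    have h : (fun x => f x * p.eval x)
        = fun x => ∑ k ∈ Finset.range (p.natDegree + 1), p.coeff k * (f x * x ^ k) := by
      funext x; rw [Polynomial.eval_eq_sum_range, Finset.mul_sum]
      exact Finset.sum_congr rfl fun k _ => by ring
    rw [h]
    exact integrable_finset_sum _ fun k hk =>
      (hfint k (le_trans (Nat.lt_succ_iff.mp (Finset.mem_range.mp hk)) hp)).const_mul _
  have hIpp : ∀ p q : Polynomial ℝ, Integrable (fun x => p.eval x * q.eval x) μ := by
    intro p q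
    have := hP1 (p * q)
    simpa [Polynomial.eval_mul] using this
  have hdeg2n : ∀ i, (ψ i).natDegree ≤ 2 * n - 2 := fun i => le_trans (hdeg i) (by omega)
  -- coefficient extraction lemmas
  have hcoef : ∀ (c : Fin n → ℝ) (j : Fin n),
      (∫ x, (∑ i, c i * (ψ i).eval x) * (ψ j).eval x ∂μ) = c j := by
    intro c j
    have h : (fun x => (∑ i, c i * (ψ i).eval x) * (ψ j).eval x)
        = fun x => ∑ i, c i * ((ψ i).eval x * (ψ j).eval x) := by
      funext x; rw [Finset.sum_mul]; exact Finset.sum_congr rfl fun i _ => by ring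
    rw [h, integral_finset_sum _ fun i _ => (hIpp (ψ i) (ψ j)).const_mul _]
    simp only [integral_const_mul, hO]
    simp
  have hIppf : ∀ i j : Fin n, Integrable (fun x => (ψ i).eval x * (ψ j).eval x * f x) μ := by
    intro i j
    have h : (fun x => (ψ i).eval x * (ψ j).eval x * f x)
        = fun x => f x * ((ψ i) * (ψ j)).eval x := by
      funext x; simp [Polynomial.eval_mul]; ring
    rw [h]
    exact hP2 _ (le_trans (Polynomial.natDegree_mul_le) (by have := hdeg i; have := hdeg j; omega))
  have hcoef_f : ∀ (c : Fin n → ℝ) (j : Fin n),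
      (∫ x, (∑ i, c i * (ψ i).eval x) * (ψ j).eval x * f x ∂μ) = c j * lam j := by
    intro c j
    have h : (fun x => (∑ i, c i * (ψ i).eval x) * (ψ j).eval x * f x)
        = fun x => ∑ i, c i * ((ψ i).eval x * (ψ j).eval x * f x) := by
      funext x; rw [Finset.sum_mul, Finset.sum_mul]
      exact Finset.sum_congr rfl fun i _ => by ring
    rw [h, integral_finset_sum _ fun i _ => (hIppf i j).const_mul _]
    simp only [integral_const_mul, hE]
    simp
  -- the ψ span all polynomials of degree < n
  have hmem : ∀ p : Polynomial ℝ, p.natDegree ≤ n - 1 → p ∈ Polynomial.degreeLT ℝ n := by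
    intro p hp
    rw [Polynomial.mem_degreeLT]
    exact lt_of_le_of_lt Polynomial.degree_le_natDegree
      (by exact_mod_cast (show p.natDegree < n by omega))
  have hfd : FiniteDimensional ℝ (Polynomial.degreeLT ℝ n) :=
    Module.Finite.equiv (Polynomial.degreeLTEquiv ℝ n).symm
  have hfr : Module.finrank ℝ (Polynomial.degreeLT ℝ n) = n :=
    (Polynomial.degreeLTEquiv ℝ n).finrank_eq.trans (Module.finrank_fin_fun ℝ)
  set ψ' : Fin n → Polynomial.degreeLT ℝ n := fun i => ⟨ψ i, hmem _ (hdeg i)⟩ with hψ'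
  have hind0 : LinearIndependent ℝ ψ := by
    rw [Fintype.linearIndependent_iff]
    intro g hg j
    have hgx : ∀ x : ℝ, ∑ i, g i * (ψ i).eval x = 0 := by
      intro x
      have := congrArg (Polynomial.eval x) hg
      simpa [Polynomial.eval_finset_sum] using this
    have h0 : (∫ x, (∑ i, g i * (ψ i).eval x) * (ψ j).eval x ∂μ) = 0 := by
      simp only [hgx, zero_mul, integral_zero]
    rw [hcoef g j] at h0
    exact h0
  have hind : LinearIndependent ℝ ψ' := by
    have hcomp : (Polynomial.degreeLT ℝ n).subtype ∘ ψ' = ψ := rfl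
    exact LinearIndependent.of_comp (Polynomial.degreeLT ℝ n).subtype (by rw [hcomp]; exact hind0)
  haveI : Nonempty (Fin n) := ⟨⟨0, hn⟩⟩
  set b : Module.Basis (Fin n) ℝ (Polynomial.degreeLT ℝ n) :=
    basisOfLinearIndependentOfCardEqFinrank hind (by simp [hfr]) with hbdef
  have hb : ⇑b = ψ' := coe_basisOfLinearIndependentOfCardEqFinrank hind _
  have hexp : ∀ p : Polynomial ℝ, p.natDegree ≤ n - 1 →
      ∃ c : Fin n → ℝ, ∀ x : ℝ, p.eval x = ∑ i, c i * (ψ i).eval x := by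
    intro p hp
    set v : Polynomial.degreeLT ℝ n := ⟨p, hmem p hp⟩ with hv
    refine ⟨fun i => b.repr v i, fun x => ?_⟩
    have hs := b.sum_repr v
    have hc : (∑ i, b.repr v i • ψ i) = p := by
      have h2 := congrArg (Subtype.val) hs
      have hvp : (v : Polynomial ℝ) = p := rfl
      rw [← hvp, ← h2, AddSubmonoidClass.coe_finset_sum]
      refine Finset.sum_congr rfl fun i _ => ?_
      rw [hb]
      rfl
    calc p.eval x = (∑ i, b.repr v i • ψ i).eval x := by rw [hc]
      _ = ∑ i, b.repr v i * (ψ i).eval x := by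
        simp [Polynomial.eval_finset_sum]
  obtain ⟨c, hcexp⟩ := hexp fLS hLSdeg
  obtain ⟨d, hdexp⟩ := hexp 1 (by simp)
  have hpsiint : ∀ j, (∫ x, (ψ j).eval x ∂μ) = d j := by
    intro j
    have h1 : (∫ x, (ψ j).eval x ∂μ)
        = ∫ x, (∑ i, d i * (ψ i).eval x) * (ψ j).eval x ∂μ := by
      congr 1; funext x
      rw [← hdexp x]; simp
    rw [h1, hcoef]
  have hAval : ∀ j, (∫ x, f x * (ψ j).eval x ∂μ) = d j * lam j := by
    intro j
    have h1 : (∫ x, f x * (ψ j).eval x ∂μ)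
        = ∫ x, (∑ i, d i * (ψ i).eval x) * (ψ j).eval x * f x ∂μ := by
      congr 1; funext x
      rw [← hdexp x, Polynomial.eval_one]; ring
    rw [h1, hcoef_f]
  have hcA : ∀ j, c j = ∫ x, f x * (ψ j).eval x ∂μ := by
    intro j
    have h0 := hLSproj (ψ j) (hdeg j)
    have hsplit : (∫ x, (f x - fLS.eval x) * (ψ j).eval x ∂μ)
        = (∫ x, f x * (ψ j).eval x ∂μ) - ∫ x, fLS.eval x * (ψ j).eval x ∂μ := by
      rw [← integral_sub (hP2 (ψ j) (hdeg2n j)) (hIpp fLS (ψ j))]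
      congr 1; funext x; ring
    rw [hsplit] at h0
    have h2 : (∫ x, fLS.eval x * (ψ j).eval x ∂μ) = c j := by
      have h3 : (∫ x, fLS.eval x * (ψ j).eval x ∂μ)
          = ∫ x, (∑ i, c i * (ψ i).eval x) * (ψ j).eval x ∂μ := by
        congr 1; funext x; rw [← hcexp x]
      rw [h3, hcoef]
    rw [h2] at h0
    linarith
  have hffLS : (∫ x, f x * fLS.eval x ∂μ)
      = ∑ j, c j * ∫ x, f x * (ψ j).eval x ∂μ := by
    have h1 : (fun x => f x * fLS.eval x)
        = fun x => ∑ j, c j * (f x * (ψ j).eval x) := by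
      funext x; rw [hcexp x, Finset.mul_sum]
      exact Finset.sum_congr rfl fun j _ => by ring
    rw [h1, integral_finset_sum _ fun j _ => (hP2 (ψ j) (hdeg2n j)).const_mul _]
    exact Finset.sum_congr rfl fun j _ => by rw [integral_const_mul]
  have hIfg : Integrable (fun x => f x * fLS.eval x) μ := hP2 fLS (by omega)
  have hIg2 : Integrable (fun x => fLS.eval x * fLS.eval x) μ := hIpp fLS fLS
  have hIresg : Integrable (fun x => (f x - fLS.eval x) * fLS.eval x) μ := by
    have h : (fun x => (f x - fLS.eval x) * fLS.eval x)
        = fun x => f x * fLS.eval x - fLS.eval x * fLS.eval x := by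
      funext x; ring
    rw [h]; exact hIfg.sub hIg2
  have hmain : (∫ x, (f x - fLS.eval x) ^ 2 ∂μ)
      = (∫ x, (f x) ^ 2 ∂μ) - ∫ x, f x * fLS.eval x ∂μ := by
    calc (∫ x, (f x - fLS.eval x) ^ 2 ∂μ)
        = ∫ x, ((f x) ^ 2 - f x * fLS.eval x) - (f x - fLS.eval x) * fLS.eval x ∂μ := by
          congr 1; funext x; ring
      _ = (∫ x, (f x) ^ 2 - f x * fLS.eval x ∂μ)
            - ∫ x, (f x - fLS.eval x) * fLS.eval x ∂μ :=
          integral_sub (hf2.sub hIfg) hIresg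
      _ = ((∫ x, (f x) ^ 2 ∂μ) - ∫ x, f x * fLS.eval x ∂μ)
            - ∫ x, (f x - fLS.eval x) * fLS.eval x ∂μ := by
          rw [integral_sub hf2 hIfg]
      _ = (∫ x, (f x) ^ 2 ∂μ) - ∫ x, f x * fLS.eval x ∂μ := by
          rw [hLSproj fLS hLSdeg, sub_zero]
  rw [hmain, hffLS]
  congr 1
  refine Finset.sum_congr rfl fun j _ => ?_
  rw [hcA j, hAval j, hpsiint j]
  ring
end

section
/- (Centered principal components expansion.) Suppose additionally ∫ f² dμ < ∞ and μ(ℝ) > 0; set f̄ = (∫ f dμ) / μ(ℝ), and let f_LS denote the orthogonal projection in L²(μ) of f onto the linear span of 1, x, …, x^{n−1}. Then for every Lebesgue eigenbasis (ψ_i, λ_i) for (μ, f, n): ∫ (f − f_LS)² dμ = ∫ (f − f̄)² dμ − Σ_{i=0}^{n−1} (λ_i − f̄)² w^[i], where w^[i] = (∫ ψ_i dμ)². -/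
open MeasureTheory Polynomial

/-- centered principal components expansion. -/
theorem least_squares_residual_pca_centered (n : ℕ) (hn : 1 ≤ n) (μ : Measure ℝ)
    (hmom : ∀ k : ℕ, Integrable (fun x => |x| ^ k) μ)
    (hgram : (Matrix.of fun j k : Fin n => ∫ x, x ^ ((j : ℕ) + (k : ℕ)) ∂μ).PosDef)
    (f : ℝ → ℝ) (hf : Measurable f)
    (hfint : ∀ m ≤ 2 * n - 2, Integrable (fun x => f x * x ^ m) μ)
    (ψ : Fin n → Polynomial ℝ) (lam : Fin n → ℝ)
    (heb : LebesgueEigenbasis μ f n ψ lam)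
    (hf2 : Integrable (fun x => (f x) ^ 2) μ)
    (hμpos : 0 < (μ Set.univ).toReal)
    (fLS : Polynomial ℝ) (hLSdeg : fLS.natDegree ≤ n - 1)
    (hLSproj : ∀ q : Polynomial ℝ, q.natDegree ≤ n - 1 →
      (∫ x, (f x - fLS.eval x) * q.eval x ∂μ) = 0) :
    (∫ x, (f x - fLS.eval x) ^ 2 ∂μ) =
      (∫ x, (f x - (∫ y, f y ∂μ) / (μ Set.univ).toReal) ^ 2 ∂μ) -
        ∑ i, (lam i - (∫ y, f y ∂μ) / (μ Set.univ).toReal) ^ 2 *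
          (∫ x, (ψ i).eval x ∂μ) ^ 2 := by
  obtain ⟨hdeg, horth, heig⟩ := heb
  -- basic integrability facts
  have hxk : ∀ k : ℕ, Integrable (fun x : ℝ => x ^ k) μ := by
    intro k
    refine (integrable_norm_iff ((continuous_pow k).measurable.aestronglyMeasurable)).mp ?_
    simpa [Real.norm_eq_abs, abs_pow] using hmom k
  have hpoly : ∀ p : Polynomial ℝ, Integrable (fun x => p.eval x) μ := by
    intro p
    have h : (fun x : ℝ => p.eval x) =
        fun x => ∑ k ∈ Finset.range (p.natDegree + 1), p.coeff k * x ^ k := by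
      funext x; rw [Polynomial.eval_eq_sum_range]
    rw [h]
    exact integrable_finset_sum _ fun k _ => (hxk k).const_mul _
  have hfp : ∀ p : Polynomial ℝ, p.natDegree ≤ 2 * n - 2 →
      Integrable (fun x => f x * p.eval x) μ := by
    intro p hp
    have h : (fun x : ℝ => f x * p.eval x) =
        fun x => ∑ k ∈ Finset.range (p.natDegree + 1), p.coeff k * (f x * x ^ k) := by
      funext x
      rw [Polynomial.eval_eq_sum_range, Finset.mul_sum]
      exact Finset.sum_congr rfl fun k _ => by ring
    rw [h]
    refine integrable_finset_sum _ fun k hk => Integrable.const_mul ?_ _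
    exact hfint k (le_trans (Nat.lt_succ_iff.mp (Finset.mem_range.mp hk)) hp)
  have hψdeg2 : ∀ i j : Fin n, ((ψ i) * (ψ j)).natDegree ≤ 2 * n - 2 := by
    intro i j
    calc ((ψ i) * (ψ j)).natDegree ≤ (ψ i).natDegree + (ψ j).natDegree :=
          Polynomial.natDegree_mul_le
    _ ≤ 2 * n - 2 := by have h1 := hdeg i; have h2 := hdeg j; omega
  have hψψ : ∀ i j : Fin n, Integrable (fun x => (ψ i).eval x * (ψ j).eval x) μ := by
    intro i j; simpa using hpoly (ψ i * ψ j)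
  have hψjf_int : ∀ i j : Fin n,
      Integrable (fun x => (ψ i).eval x * ((ψ j).eval x * f x)) μ := by
    intro i j
    have heq : (fun x => (ψ i).eval x * ((ψ j).eval x * f x))
        = fun x => f x * ((ψ i) * (ψ j)).eval x := by
      funext x; simp; ring
    rw [heq]; exact hfp _ (hψdeg2 i j)
  have hψf_int : ∀ i : Fin n, Integrable (fun x => (ψ i).eval x * f x) μ := by
    intro i
    have heq : (fun x => (ψ i).eval x * f x) = fun x => f x * (ψ i).eval x := by
      funext x; ring
    rw [heq]; exact hfp (ψ i) (le_trans (hdeg i) (by omega))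
  -- key linearity lemma
  have key : ∀ (c : Fin n → ℝ) (q : ℝ → ℝ),
      (∀ i, Integrable (fun x => (ψ i).eval x * q x) μ) →
      (∫ x, (∑ i, c i * (ψ i).eval x) * q x ∂μ)
        = ∑ i, c i * ∫ x, (ψ i).eval x * q x ∂μ := by
    intro c q hint
    have h : (fun x => (∑ i, c i * (ψ i).eval x) * q x)
        = fun x => ∑ i, c i * ((ψ i).eval x * q x) := by
      funext x; rw [Finset.sum_mul]; exact Finset.sum_congr rfl fun i _ => by ring
    rw [h, integral_finset_sum _ fun i _ => (hint i).const_mul _]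
    exact Finset.sum_congr rfl fun i _ => integral_const_mul _ _
  -- the ψ i span the polynomials of degree < n
  have hmemLT : ∀ p : Polynomial ℝ, p.natDegree ≤ n - 1 → p ∈ Polynomial.degreeLT ℝ n := by
    intro p hp
    rw [Polynomial.mem_degreeLT]
    calc p.degree ≤ (p.natDegree : WithBot ℕ) := Polynomial.degree_le_natDegree
    _ < (n : WithBot ℕ) := by exact_mod_cast (by omega : p.natDegree < n)
  haveI : FiniteDimensional ℝ (Polynomial.degreeLT ℝ n) :=
    LinearEquiv.finiteDimensional (Polynomial.degreeLTEquiv ℝ n).symm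
  have hfinrank : Module.finrank ℝ (Polynomial.degreeLT ℝ n) = n := by
    rw [(Polynomial.degreeLTEquiv ℝ n).finrank_eq]
    simp
  set Ψ : Fin n → Polynomial.degreeLT ℝ n := fun i => ⟨ψ i, hmemLT _ (hdeg i)⟩ with hΨ
  have hli : LinearIndependent ℝ Ψ := by
    rw [Fintype.linearIndependent_iff]
    intro g hg j
    have hg' : (∑ i, g i • ψ i) = 0 := by
      have h := congrArg Subtype.val hg
      simpa [Ψ] using h
    have hz : ∀ x : ℝ, (∑ i, g i * (ψ i).eval x) = 0 := by
      intro x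
      have h := congrArg (Polynomial.eval x) hg'
      simpa [Polynomial.eval_finset_sum] using h
    have h0 : (∫ x, (∑ i, g i * (ψ i).eval x) * (ψ j).eval x ∂μ) = 0 := by
      simp [hz]
    rw [key g _ (fun i => hψψ i j)] at h0
    simpa [horth, Finset.sum_ite_eq'] using h0
  have hspan : ∀ p : Polynomial ℝ, p.natDegree ≤ n - 1 →
      ∃ c : Fin n → ℝ, p = ∑ i, c i • ψ i := by
    intro p hp
    haveI : Nonempty (Fin n) := ⟨⟨0, hn⟩⟩
    have hcard : Fintype.card (Fin n) = Module.finrank ℝ (Polynomial.degreeLT ℝ n) := by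
      simp [hfinrank]
    let B := basisOfLinearIndependentOfCardEqFinrank hli hcard
    have hB : ⇑B = Ψ := coe_basisOfLinearIndependentOfCardEqFinrank hli hcard
    refine ⟨fun i => B.repr ⟨p, hmemLT p hp⟩ i, ?_⟩
    have h := B.sum_repr ⟨p, hmemLT p hp⟩
    rw [hB] at h
    have h2 := congrArg Subtype.val h
    simpa [Ψ] using h2.symm
  obtain ⟨b, hb⟩ := hspan 1 (by simp)
  obtain ⟨c, hc⟩ := hspan fLS hLSdeg
  have hb1 : ∀ x : ℝ, (1 : ℝ) = ∑ i, b i * (ψ i).eval x := by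
    intro x
    have h := congrArg (Polynomial.eval x) hb
    simpa [Polynomial.eval_finset_sum] using h
  have hcLS : ∀ x : ℝ, fLS.eval x = ∑ i, c i * (ψ i).eval x := by
    intro x
    have h := congrArg (Polynomial.eval x) hc
    simpa [Polynomial.eval_finset_sum] using h
  -- coefficients
  have hbj : ∀ j, (∫ x, (ψ j).eval x ∂μ) = b j := by
    intro j
    have h1 : (fun x => (ψ j).eval x)
        = fun x => (∑ i, b i * (ψ i).eval x) * (ψ j).eval x := by
      funext x; rw [← hb1 x, one_mul]
    rw [h1, key b _ (fun i => hψψ i j)]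
    simp [horth, Finset.sum_ite_eq']
  have hfψ : ∀ j, (∫ x, (ψ j).eval x * f x ∂μ) = b j * lam j := by
    intro j
    have h1 : (fun x => (ψ j).eval x * f x)
        = fun x => (∑ i, b i * (ψ i).eval x) * ((ψ j).eval x * f x) := by
      funext x; rw [← hb1 x, one_mul]
    rw [h1, key b _ (fun i => hψjf_int i j)]
    have h2 : ∀ i, (∫ x, (ψ i).eval x * ((ψ j).eval x * f x) ∂μ)
        = if i = j then lam i else 0 := by
      intro i
      rw [← heig i j]
      exact integral_congr_ae (Filter.Eventually.of_forall fun x => by ring)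
    simp [h2, Finset.sum_ite_eq']
  have hcj : ∀ j, (∫ x, fLS.eval x * (ψ j).eval x ∂μ) = c j := by
    intro j
    have h1 : (fun x => fLS.eval x * (ψ j).eval x)
        = fun x => (∑ i, c i * (ψ i).eval x) * (ψ j).eval x := by
      funext x; rw [← hcLS x]
    rw [h1, key c _ (fun i => hψψ i j)]
    simp [horth, Finset.sum_ite_eq']
  have hfψ_int : ∀ j : Fin n, Integrable (fun x => f x * (ψ j).eval x) μ :=
    fun j => hfp (ψ j) (le_trans (hdeg j) (by omega))
  have hLSψ_int : ∀ j : Fin n, Integrable (fun x => fLS.eval x * (ψ j).eval x) μ :=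
    fun j => by simpa using hpoly (fLS * ψ j)
  have hproj : ∀ j, (∫ x, f x * (ψ j).eval x ∂μ) = c j := by
    intro j
    have h0 := hLSproj (ψ j) (hdeg j)
    have h1 : (fun x => (f x - fLS.eval x) * (ψ j).eval x)
        = fun x => f x * (ψ j).eval x - fLS.eval x * (ψ j).eval x := by
      funext x; ring
    rw [h1, integral_sub (hfψ_int j) (hLSψ_int j), hcj j] at h0
    linarith
  have hcb : ∀ j, c j = b j * lam j := by
    intro j
    rw [← hproj j, ← hfψ j]
    exact integral_congr_ae (Filter.Eventually.of_forall fun x => mul_comm _ _)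
  -- main integral identities
  have hfLS2 : (∫ x, fLS.eval x ^ 2 ∂μ) = ∑ i, c i ^ 2 := by
    have h1 : (fun x => fLS.eval x ^ 2)
        = fun x => (∑ i, c i * (ψ i).eval x) * fLS.eval x := by
      funext x; rw [← hcLS x]; ring
    rw [h1, key c _ (fun i => by simpa using hpoly (ψ i * fLS))]
    refine Finset.sum_congr rfl fun i _ => ?_
    have h2 : (∫ x, (ψ i).eval x * fLS.eval x ∂μ) = c i := by
      rw [← hcj i]
      exact integral_congr_ae (Filter.Eventually.of_forall fun x => mul_comm _ _)
    rw [h2]; ring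
  have hμ : (μ Set.univ).toReal = ∑ i, b i ^ 2 := by
    have h0 : (∫ _x : ℝ, (1 : ℝ) ∂μ) = (μ Set.univ).toReal := by simp; rfl
    rw [← h0]
    have h1 : (fun _x : ℝ => (1 : ℝ))
        = fun x => (∑ i, b i * (ψ i).eval x) * (1 : ℝ) := by
      funext x; rw [← hb1 x, mul_one]
    rw [h1, key b _ (fun i => by simpa using hpoly (ψ i))]
    refine Finset.sum_congr rfl fun i _ => ?_
    simp only [mul_one]
    rw [hbj i]; ring
  have hIf : (∫ x, f x ∂μ) = ∑ i, b i ^ 2 * lam i := by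
    have h1 : (fun x => f x) = fun x => (∑ i, b i * (ψ i).eval x) * f x := by
      funext x; rw [← hb1 x, one_mul]
    rw [h1, key b _ hψf_int]
    refine Finset.sum_congr rfl fun i _ => ?_
    rw [hfψ i]; ring
  have hffLS_int : Integrable (fun x => f x * fLS.eval x) μ :=
    hfp fLS (le_trans hLSdeg (by omega))
  have hfLSsq_int : Integrable (fun x => fLS.eval x ^ 2) μ := by
    have h : (fun x => fLS.eval x ^ 2) = fun x => (fLS * fLS).eval x := by
      funext x; simp [sq]
    rw [h]; exact hpoly _
  have hf_int : Integrable f μ := by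
    have h := hfp 1 (by simp)
    simpa using h
  have hone_int : Integrable (fun _ : ℝ => (1 : ℝ)) μ := by simpa using hpoly 1
  haveI : IsFiniteMeasure μ := by
    rcases integrable_const_iff.mp hone_int with h | h
    · exact absurd h one_ne_zero
    · exact h
  have hLHS : (∫ x, (f x - fLS.eval x) ^ 2 ∂μ) = (∫ x, f x ^ 2 ∂μ) - ∑ i, c i ^ 2 := by
    have h1 : (fun x => (f x - fLS.eval x) ^ 2)
        = fun x => (f x ^ 2 - 2 * (f x * fLS.eval x)) + fLS.eval x ^ 2 := by
      funext x; ring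
    have hffLS : (∫ x, f x * fLS.eval x ∂μ) = ∑ i, c i ^ 2 := by
      have h0 := hLSproj fLS hLSdeg
      have h2 : (fun x => (f x - fLS.eval x) * fLS.eval x)
          = fun x => f x * fLS.eval x - fLS.eval x ^ 2 := by funext x; ring
      rw [h2, integral_sub hffLS_int hfLSsq_int, hfLS2] at h0
      linarith
    have hint1 : Integrable (fun x => f x ^ 2 - 2 * (f x * fLS.eval x)) μ :=
      hf2.sub (hffLS_int.const_mul 2)
    have hint2 : Integrable (fun x => 2 * (f x * fLS.eval x)) μ := hffLS_int.const_mul 2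
    rw [h1, integral_add hint1 hfLSsq_int, integral_sub hf2 hint2,
        integral_const_mul, hffLS, hfLS2]
    ring
  set m := (∫ y, f y ∂μ) / (μ Set.univ).toReal with hm
  have hRHS1 : (∫ x, (f x - m) ^ 2 ∂μ)
      = (∫ x, f x ^ 2 ∂μ) - 2 * m * (∫ x, f x ∂μ) + m ^ 2 * (μ Set.univ).toReal := by
    have h1 : (fun x => (f x - m) ^ 2)
        = fun x => (f x ^ 2 - 2 * m * f x) + m ^ 2 := by
      funext x; ring
    have hint1 : Integrable (fun x => f x ^ 2 - 2 * m * f x) μ :=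
      hf2.sub (hf_int.const_mul _)
    have hint2 : Integrable (fun x => 2 * m * f x) μ := hf_int.const_mul _
    rw [h1, integral_add hint1 (integrable_const _), integral_sub hf2 hint2,
        integral_const_mul, integral_const]
    simp [smul_eq_mul, Measure.real]; ring
  have hsum : (∑ i, (lam i - m) ^ 2 * (∫ x, (ψ i).eval x ∂μ) ^ 2)
      = ∑ i, (lam i - m) ^ 2 * b i ^ 2 :=
    Finset.sum_congr rfl fun i _ => by rw [hbj i]
  have hcsum : (∑ i, c i ^ 2) = ∑ i, b i ^ 2 * lam i ^ 2 :=
    Finset.sum_congr rfl fun i _ => by rw [hcb i]; ring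
  have hexp : (∑ i, (lam i - m) ^ 2 * b i ^ 2)
      = (∑ i, b i ^ 2 * lam i ^ 2) - 2 * m * (∑ i, b i ^ 2 * lam i)
        + m ^ 2 * (∑ i, b i ^ 2) := by
    have h : ∀ i : Fin n, (lam i - m) ^ 2 * b i ^ 2
        = b i ^ 2 * lam i ^ 2 - 2 * m * (b i ^ 2 * lam i) + m ^ 2 * b i ^ 2 :=
      fun i => by ring
    simp_rw [h, Finset.sum_add_distrib, Finset.sum_sub_distrib, ← Finset.mul_sum]
  rw [hLHS, hRHS1, hsum, hcsum, hIf, hμ, hexp]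
  ring
end

section
/- (Density matrix corresponding to a given polynomial, Theorem 4.) For every real polynomial P of degree ≤ 2n−2 there exist real numbers λ_0, …, λ_{n−1} and real polynomials ψ_0, …, ψ_{n−1} of degree ≤ n−1 with ∫ ψ_i ψ_j dμ = δ_{ij} such that P(x) = Σ_{i=0}^{n−1} λ_i ψ_i(x)² for all x ∈ ℝ; consequently ∫ P dμ = Σ_{i=0}^{n−1} λ_i. -/
open MeasureTheory Polynomial Matrix

/-- Theorem 4: every real polynomial `P` of degree `≤ 2n-2` can be written
as `P(x) = Σ_i lam_i ψ_i(x)²` with `ψ_i` orthonormal in `L²(μ)` of degree `≤ n-1`;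
consequently `∫ P dμ = Σ_i lam_i`. -/
theorem density_matrix_of_polynomial (n : ℕ) (hn : 1 ≤ n) (μ : Measure ℝ)
    (hmom : ∀ k : ℕ, Integrable (fun x => |x| ^ k) μ)
    (hgram : (Matrix.of fun j k : Fin n => ∫ x, x ^ ((j : ℕ) + (k : ℕ)) ∂μ).PosDef)
    (P : Polynomial ℝ) (hPdeg : P.natDegree ≤ 2 * n - 2) :
    ∃ (lam : Fin n → ℝ) (ψ : Fin n → Polynomial ℝ),
      (∀ i, (ψ i).natDegree ≤ n - 1) ∧
      (∀ i j, (∫ x, (ψ i).eval x * (ψ j).eval x ∂μ) = if i = j then 1 else 0) ∧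
      (∀ x : ℝ, P.eval x = ∑ i, lam i * ((ψ i).eval x) ^ 2) ∧
      (∫ x, P.eval x ∂μ) = ∑ i, lam i := by
  classical
  -- integrability of monomials
  have hxk : ∀ k : ℕ, Integrable (fun x : ℝ => x ^ k) μ := fun k =>
    (hmom k).mono' (measurable_id.pow_const k).aestronglyMeasurable
      (Filter.Eventually.of_forall fun x => by
        simp [Real.norm_eq_abs, abs_pow])
  set M : Matrix (Fin n) (Fin n) ℝ :=
    Matrix.of fun j k : Fin n => ∫ x, x ^ ((j : ℕ) + (k : ℕ)) ∂μ with hMdef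
  -- counting function
  set cnt : ℕ → ℕ := fun m =>
    (Finset.univ.filter (fun p : Fin n × Fin n => (p.1 : ℕ) + (p.2 : ℕ) = m)).card with hcntdef
  have hcnt : ∀ m : ℕ, m ≤ 2 * n - 2 → 0 < cnt m := by
    intro m hm
    rw [hcntdef]
    refine Finset.card_pos.mpr ?_
    refine ⟨(⟨min m (n-1), by omega⟩, ⟨m - min m (n-1), by omega⟩), ?_⟩
    simp only [Finset.mem_filter, Finset.mem_univ, true_and]
    omega
  -- the symmetric matrix representing P
  set A : Matrix (Fin n) (Fin n) ℝ :=
    Matrix.of (fun j k : Fin n =>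
      P.coeff ((j : ℕ) + (k : ℕ)) / (cnt ((j : ℕ) + (k : ℕ)) : ℝ)) with hAdef
  have hAquad : ∀ x : ℝ, ∑ j : Fin n, ∑ k : Fin n,
      A j k * x ^ ((j : ℕ) + (k : ℕ)) = P.eval x := by
    intro x
    have hmaps : ∀ p : Fin n × Fin n, p ∈ (Finset.univ : Finset (Fin n × Fin n)) →
        (p.1 : ℕ) + (p.2 : ℕ) ∈ Finset.range (2 * n - 1) := by
      intro p _
      have h1 := p.1.2
      have h2 := p.2.2
      simp only [Finset.mem_range]
      omega
    calc ∑ j : Fin n, ∑ k : Fin n, A j k * x ^ ((j : ℕ) + (k : ℕ))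
        = ∑ p : Fin n × Fin n, A p.1 p.2 * x ^ ((p.1 : ℕ) + (p.2 : ℕ)) := by
          rw [← Finset.sum_product']
          rfl
      _ = ∑ m ∈ Finset.range (2 * n - 1),
            ∑ p ∈ Finset.univ.filter
              (fun p : Fin n × Fin n => (p.1 : ℕ) + (p.2 : ℕ) = m),
              A p.1 p.2 * x ^ ((p.1 : ℕ) + (p.2 : ℕ)) :=
          (Finset.sum_fiberwise_of_maps_to hmaps _).symm
      _ = ∑ m ∈ Finset.range (2 * n - 1), P.coeff m * x ^ m := by
          refine Finset.sum_congr rfl fun m hm => ?_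
          have hm' : m ≤ 2 * n - 2 := by
            simp only [Finset.mem_range] at hm; omega
          have hc := hcnt m hm'
          have hc' : (cnt m : ℝ) ≠ 0 := Nat.cast_ne_zero.mpr hc.ne'
          have : ∀ p ∈ Finset.univ.filter
              (fun p : Fin n × Fin n => (p.1 : ℕ) + (p.2 : ℕ) = m),
              A p.1 p.2 * x ^ ((p.1 : ℕ) + (p.2 : ℕ))
                = P.coeff m / (cnt m : ℝ) * x ^ m := by
            intro p hp
            simp only [Finset.mem_filter, Finset.mem_univ, true_and] at hp
            rw [hAdef]
            simp only [Matrix.of_apply, hp]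
          rw [Finset.sum_congr rfl this, Finset.sum_const]
          rw [nsmul_eq_mul]
          field_simp
          simp only [hcntdef]
          ring
      _ = P.eval x := by
          rw [eval_eq_sum_range' (n := 2 * n - 1) (by omega) x]
  -- A is hermitian
  have hAh : Aᴴ = A := by
    ext j k
    simp only [Matrix.conjTranspose_apply, hAdef, Matrix.of_apply, star_trivial]
    rw [Nat.add_comm]
  -- square root of M
  set S : Matrix (Fin n) (Fin n) ℝ := (open scoped MatrixOrder in CFC.sqrt M) with hSdef
  have hSh : Sᴴ = S := by open scoped MatrixOrder in exact (CFC.sqrt_nonneg M).posSemidef.1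
  have hSS : S * S = M := by
    open scoped MatrixOrder in exact CFC.sqrt_mul_sqrt_self M hgram.posSemidef.nonneg
  have hSdet : IsUnit S.det := by
    have hMdet : (0:ℝ) < M.det := hgram.det_pos
    have : S.det * S.det = M.det := by rw [← Matrix.det_mul, hSS]
    refine isUnit_iff_ne_zero.mpr fun h => ?_
    rw [h, mul_zero] at this
    exact hMdet.ne (by rw [this])
  have hSinv : S * S⁻¹ = 1 := Matrix.mul_nonsing_inv S hSdet
  have hinvS : S⁻¹ * S = 1 := Matrix.nonsing_inv_mul S hSdet
  have hSinvh : (S⁻¹)ᴴ = S⁻¹ := by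
    rw [Matrix.conjTranspose_nonsing_inv, hSh]
  -- B = S A S and its spectral decomposition
  set B : Matrix (Fin n) (Fin n) ℝ := S * A * S with hBdef
  have hB : B.IsHermitian := by
    unfold Matrix.IsHermitian
    rw [hBdef, Matrix.conjTranspose_mul, Matrix.conjTranspose_mul, hSh, hAh,
      Matrix.mul_assoc]
  set U : Matrix (Fin n) (Fin n) ℝ := (hB.eigenvectorUnitary : Matrix (Fin n) (Fin n) ℝ)
    with hUdef
  set lam : Fin n → ℝ := hB.eigenvalues with hlamdef
  set D : Matrix (Fin n) (Fin n) ℝ := Matrix.diagonal lam with hDdef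
  have hspec : B = U * D * Uᴴ := by
    have := hB.spectral_theorem
    rw [RCLike.ofReal_real_eq_id] at this
    simpa [hDdef, hUdef, Matrix.star_eq_conjTranspose, hlamdef] using this
  have hUU : U * Uᴴ = 1 := by
    rw [← Matrix.star_eq_conjTranspose]
    exact (Matrix.mem_unitaryGroup_iff).mp hB.eigenvectorUnitary.2
  have hUU' : Uᴴ * U = 1 := by
    rw [← Matrix.star_eq_conjTranspose]
    exact (Matrix.mem_unitaryGroup_iff').mp hB.eigenvectorUnitary.2
  -- the change-of-basis matrix
  set Cm : Matrix (Fin n) (Fin n) ℝ := Uᴴ * S⁻¹ with hCdef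
  have hCh : Cmᴴ = S⁻¹ * U := by
    rw [hCdef, Matrix.conjTranspose_mul, hSinvh, Matrix.conjTranspose_conjTranspose]
  -- key identity 1 : Cm * M * Cmᴴ = 1
  have key1 : Cm * M * Cmᴴ = 1 := by
    rw [hCh, hCdef, ← hSS]
    calc Uᴴ * S⁻¹ * (S * S) * (S⁻¹ * U)
        = Uᴴ * ((S⁻¹ * S) * (S * S⁻¹)) * U := by
          simp only [Matrix.mul_assoc]
      _ = Uᴴ * U := by rw [hinvS, hSinv, one_mul, Matrix.mul_one]
      _ = 1 := hUU'
  -- key identity 2 : Cmᴴ * D * Cm = A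
  have key2 : Cmᴴ * D * Cm = A := by
    rw [hCh, hCdef]
    calc S⁻¹ * U * D * (Uᴴ * S⁻¹)
        = S⁻¹ * (U * D * Uᴴ) * S⁻¹ := by simp only [Matrix.mul_assoc]
      _ = S⁻¹ * B * S⁻¹ := by rw [← hspec]
      _ = (S⁻¹ * S) * A * (S * S⁻¹) := by rw [hBdef]; simp only [Matrix.mul_assoc]
      _ = A := by rw [hinvS, hSinv, one_mul, Matrix.mul_one]
  -- the polynomials
  set ψ : Fin n → Polynomial ℝ :=
    fun i => ∑ k : Fin n, Polynomial.C (Cm i k) * Polynomial.X ^ (k : ℕ) with hψdef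
  have heval : ∀ i (x : ℝ), (ψ i).eval x = ∑ k : Fin n, Cm i k * x ^ (k : ℕ) := by
    intro i x
    rw [hψdef]
    simp [eval_finset_sum]
  have hdeg : ∀ i, (ψ i).natDegree ≤ n - 1 := by
    intro i
    rw [hψdef]
    refine natDegree_sum_le_of_forall_le _ _ fun k _ => ?_
    refine (natDegree_C_mul_le _ _).trans ?_
    rw [natDegree_X_pow]
    have := k.2
    omega
  -- orthonormality
  have horth : ∀ i j, (∫ x, (ψ i).eval x * (ψ j).eval x ∂μ) = (Cm * M * Cmᴴ) i j := by
    intro i j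
    have h1 : ∀ x : ℝ, (ψ i).eval x * (ψ j).eval x
        = ∑ k : Fin n, ∑ l : Fin n, Cm i k * Cm j l * x ^ ((k : ℕ) + (l : ℕ)) := by
      intro x
      rw [heval i x, heval j x, Finset.sum_mul_sum]
      refine Finset.sum_congr rfl fun k _ => Finset.sum_congr rfl fun l _ => ?_
      rw [pow_add]; ring
    simp_rw [h1]
    rw [integral_finset_sum _ (fun k _ =>
      integrable_finset_sum _ (fun l _ => (hxk _).const_mul _))]
    simp_rw [integral_finset_sum _ (fun l _ => (hxk _).const_mul _),
      integral_const_mul]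
    simp only [Matrix.mul_apply, Matrix.conjTranspose_apply, star_trivial,
      hMdef, Matrix.of_apply, Finset.sum_mul]
    rw [Finset.sum_comm]
    refine Finset.sum_congr rfl fun k _ => Finset.sum_congr rfl fun l _ => ?_
    ring
  have horth' : ∀ i j, (∫ x, (ψ i).eval x * (ψ j).eval x ∂μ)
      = if i = j then (1:ℝ) else 0 := by
    intro i j
    rw [horth i j, key1, Matrix.one_apply]
  -- pointwise identity
  have hpoint : ∀ x : ℝ, P.eval x = ∑ i, lam i * ((ψ i).eval x) ^ 2 := by
    intro x
    set v : Fin n → ℝ := fun j => x ^ (j : ℕ) with hvdef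
    have hv : ∀ i, (ψ i).eval x = (Cm *ᵥ v) i := by
      intro i
      rw [heval i x]
      simp [Matrix.mulVec, dotProduct, hvdef]
    calc P.eval x
        = ∑ j : Fin n, ∑ k : Fin n, A j k * x ^ ((j : ℕ) + (k : ℕ)) := (hAquad x).symm
      _ = v ⬝ᵥ (A *ᵥ v) := by
          simp only [dotProduct, Matrix.mulVec, hvdef, Finset.mul_sum]
          refine Finset.sum_congr rfl fun j _ => Finset.sum_congr rfl fun k _ => ?_
          rw [pow_add]; ring
      _ = v ⬝ᵥ ((Cmᴴ * D * Cm) *ᵥ v) := by rw [key2]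
      _ = v ⬝ᵥ (Cmᴴ *ᵥ (D *ᵥ (Cm *ᵥ v))) := by
          simp only [Matrix.mulVec_mulVec, Matrix.mul_assoc]
      _ = (Cm *ᵥ v) ⬝ᵥ (D *ᵥ (Cm *ᵥ v)) := by
          have hCt : Cmᴴ = Cmᵀ := by
            ext a b
            simp [Matrix.conjTranspose_apply, Matrix.transpose_apply]
          rw [Matrix.dotProduct_mulVec, hCt, Matrix.vecMul_transpose]
      _ = ∑ i, lam i * ((ψ i).eval x) ^ 2 := by
          refine Finset.sum_congr rfl fun i _ => ?_
          rw [hv i, hDdef, Matrix.mulVec_diagonal]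
          ring
  -- the integral consequence
  have hint : (∫ x, P.eval x ∂μ) = ∑ i, lam i := by
    have hintψ : ∀ i : Fin n, Integrable (fun x => lam i * ((ψ i).eval x) ^ 2) μ := by
      intro i
      have : Integrable (fun x => ((ψ i) * (ψ i)).eval x) μ := by
        have hev : (fun x => ((ψ i) * (ψ i)).eval x)
            = fun x => ∑ k ∈ Finset.range (((ψ i) * (ψ i)).natDegree + 1),
                ((ψ i) * (ψ i)).coeff k * x ^ k := by
          funext x
          exact eval_eq_sum_range _
        rw [hev]
        exact integrable_finset_sum _ (fun k _ => (hxk _).const_mul _)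
      refine Integrable.const_mul ?_ _
      simpa [sq] using this
    calc (∫ x, P.eval x ∂μ)
        = ∫ x, ∑ i, lam i * ((ψ i).eval x) ^ 2 ∂μ := by
          refine integral_congr_ae (Filter.Eventually.of_forall fun x => ?_)
          exact hpoint x
      _ = ∑ i, ∫ x, lam i * ((ψ i).eval x) ^ 2 ∂μ :=
          integral_finset_sum _ (fun i _ => hintψ i)
      _ = ∑ i, lam i := by
          refine Finset.sum_congr rfl fun i _ => ?_
          rw [integral_const_mul]
          have h2 : (∫ x, ((ψ i).eval x) ^ 2 ∂μ) = 1 := by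
            have h3 := horth' i i
            simp only [if_pos rfl] at h3
            simpa [pow_two] using h3
          rw [h2, mul_one]
  exact ⟨lam, ψ, hdeg, horth', hpoint, hint⟩
end
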